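/- arXiv:2603.14230 — 5 statements merged into one kernel-verified Lean document; each statement's English description precedes it below -/
import Mathlib

section
/- Fix an integer N ≥ 1, an N×N real symmetric matrix M, a real s ≥ 1, and z = E + iη with η > 0. For v ∈ ℝ^N let S(v) = (M + diag(v) − z·Id)^{−1} (a complex matrix; the inverse exists since M + diag(v) is real symmetric and η > 0), and define F_s(v) = (1/N)·∑_{i=1}^N (Im S(v)_{ii})^s. Then F_s is Lipschitz on ℝ^N with respect to the Euclidean norm, with Lipschitz constant s/(η^{s+1}·√N). -/
open Matrix
open scoped Real

noncomputable section

/-- The resolvent `S(v) = (M + diag(v) - z)⁻¹` as a complex matrix. -/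
def resS {N : ℕ} (M : Matrix (Fin N) (Fin N) ℝ) (z : ℂ) (v : Fin N → ℝ) :
    Matrix (Fin N) (Fin N) ℂ :=
  (((M + Matrix.diagonal v).map (fun x => (x : ℂ))) - z • 1)⁻¹

section Aux
variable {N : ℕ} (A : Matrix (Fin N) (Fin N) ℝ) (z : ℂ)

def resB : Matrix (Fin N) (Fin N) ℂ := (A.map (fun x => (x : ℂ))) - z • 1

lemma quad_im (hA : A.IsSymm) (y : Fin N → ℂ) :
    (∑ i, (starRingEnd ℂ) (y i) * ((resB A z) *ᵥ y) i).im
      = - z.im * ∑ i, Complex.normSq (y i) := by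
  have hB : (resB A z) *ᵥ y = (A.map (fun x => (x : ℂ))) *ᵥ y - z • y := by
    simp [resB, sub_mulVec, smul_mulVec]
  rw [hB]
  have hsplit : (∑ i, (starRingEnd ℂ) (y i) *
      (((A.map (fun x => (x : ℂ))) *ᵥ y) - z • y) i)
      = (∑ i, ∑ j, (starRingEnd ℂ) (y i) * (A i j : ℂ) * y j)
        - z * ((∑ i, Complex.normSq (y i) : ℝ) : ℂ) := by
    push_cast
    simp only [Pi.sub_apply, Pi.smul_apply, smul_eq_mul, mulVec, dotProduct, map_apply,
      Finset.mul_sum, mul_sub]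
    rw [Finset.sum_sub_distrib]
    congr 1
    · exact Finset.sum_congr rfl fun i _ => Finset.sum_congr rfl fun j _ => by ring
    · exact Finset.sum_congr rfl fun i _ => by
        rw [Complex.normSq_eq_conj_mul_self]; ring
  rw [hsplit]
  have hT : (starRingEnd ℂ) (∑ i, ∑ j, (starRingEnd ℂ) (y i) * (A i j : ℂ) * y j)
      = ∑ i, ∑ j, (starRingEnd ℂ) (y i) * (A i j : ℂ) * y j := by
    rw [map_sum, Finset.sum_comm]
    refine Finset.sum_congr rfl fun i _ => ?_
    rw [map_sum]
    refine Finset.sum_congr rfl fun j _ => ?_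
    simp only [_root_.map_mul, Complex.conj_conj, Complex.conj_ofReal]
    rw [show A j i = A i j from (hA.apply i j)]
    ring
  have hTim : (∑ i, ∑ j, (starRingEnd ℂ) (y i) * (A i j : ℂ) * y j).im = 0 :=
    Complex.conj_eq_iff_im.mp hT
  rw [Complex.sub_im, hTim, Complex.mul_im]
  simp

lemma resB_mulVec_eq_zero (hA : A.IsSymm) (hz : z.im ≠ 0) (y : Fin N → ℂ)
    (hy : (resB A z) *ᵥ y = 0) : y = 0 := by
  have h := quad_im A z hA y
  rw [hy] at h
  simp only [Pi.zero_apply, mul_zero, Finset.sum_const_zero, Complex.zero_im] at h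
  have hsum : ∑ i, Complex.normSq (y i) = 0 := by
    rcases mul_eq_zero.mp h.symm with h' | h'
    · exact absurd (neg_eq_zero.mp h') hz
    · exact h'
  funext i
  have := (Finset.sum_eq_zero_iff_of_nonneg (fun j _ => Complex.normSq_nonneg (y j))).mp hsum
    i (Finset.mem_univ i)
  simpa using Complex.normSq_eq_zero.mp this

lemma resB_isUnit (hA : A.IsSymm) (hz : z.im ≠ 0) : IsUnit (resB A z) := by
  rw [← Matrix.mulVec_injective_iff_isUnit]
  intro y y' h
  have h0 := resB_mulVec_eq_zero A z hA hz (y - y')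
    (by rw [mulVec_sub, h, sub_self])
  exact sub_eq_zero.mp h0

lemma resB_mul_inv (hA : A.IsSymm) (hz : z.im ≠ 0) : (resB A z) * (resB A z)⁻¹ = 1 :=
  Matrix.mul_nonsing_inv _ ((Matrix.isUnit_iff_isUnit_det _).mp (resB_isUnit A z hA hz))

lemma resB_inv_mul (hA : A.IsSymm) (hz : z.im ≠ 0) : (resB A z)⁻¹ * (resB A z) = 1 :=
  Matrix.nonsing_inv_mul _ ((Matrix.isUnit_iff_isUnit_det _).mp (resB_isUnit A z hA hz))

lemma resB_mulVec_col (hA : A.IsSymm) (hz : z.im ≠ 0) (i : Fin N) :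
    (resB A z) *ᵥ (fun k => (resB A z)⁻¹ k i) = Pi.single i 1 := by
  have hcol : (fun k => (resB A z)⁻¹ k i) = (resB A z)⁻¹ *ᵥ Pi.single i 1 := by
    funext k
    simp [Matrix.mulVec_single]
  rw [hcol, Matrix.mulVec_mulVec, resB_mul_inv A z hA hz, Matrix.one_mulVec]

lemma im_diag_eq (hA : A.IsSymm) (hz : z.im ≠ 0) (i : Fin N) :
    ((resB A z)⁻¹ i i).im = z.im * ∑ k, Complex.normSq ((resB A z)⁻¹ k i) := by
  have h := quad_im A z hA (fun k => (resB A z)⁻¹ k i)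
  rw [resB_mulVec_col A z hA hz i] at h
  have hq : (∑ k, (starRingEnd ℂ) ((resB A z)⁻¹ k i) * Pi.single (M := fun _ => ℂ) i 1 k)
      = (starRingEnd ℂ) ((resB A z)⁻¹ i i) := by
    rw [Finset.sum_eq_single i]
    · simp
    · intro b _ hb; simp [Pi.single_apply, hb]
    · simp
  rw [hq] at h
  simp only [Complex.conj_im] at h
  linarith [h]

lemma col_pos (hA : A.IsSymm) (hz : z.im ≠ 0) (i : Fin N) :
    0 < ∑ k, Complex.normSq ((resB A z)⁻¹ k i) := by
  rcases (Finset.sum_nonneg (fun k _ => Complex.normSq_nonneg _)).lt_or_eq with h | h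
  · exact h
  · exfalso
    have hall : ∀ k, (resB A z)⁻¹ k i = 0 := by
      intro k
      have := (Finset.sum_eq_zero_iff_of_nonneg
        (fun j _ => Complex.normSq_nonneg ((resB A z)⁻¹ j i))).mp h.symm k (Finset.mem_univ k)
      exact Complex.normSq_eq_zero.mp this
    have h1 := resB_mulVec_col A z hA hz i
    have : (fun k => (resB A z)⁻¹ k i) = (0 : Fin N → ℂ) := funext fun k => hall k
    rw [this, Matrix.mulVec_zero] at h1
    have := congrFun h1 i
    simp at this

lemma col_le (hA : A.IsSymm) (hz : 0 < z.im) (i : Fin N) :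
    ∑ k, Complex.normSq ((resB A z)⁻¹ k i) ≤ (z.im)⁻¹ ^ 2 := by
  set t := ∑ k, Complex.normSq ((resB A z)⁻¹ k i) with ht
  have htpos : 0 < t := col_pos A z hA hz.ne' i
  have him := im_diag_eq A z hA hz.ne' i
  have h1 : ((resB A z)⁻¹ i i).im ≤ Real.sqrt t := by
    calc ((resB A z)⁻¹ i i).im ≤ |((resB A z)⁻¹ i i).im| := le_abs_self _
    _ ≤ ‖(resB A z)⁻¹ i i‖ := Complex.abs_im_le_norm _
    _ = Real.sqrt (Complex.normSq ((resB A z)⁻¹ i i)) := Complex.norm_def _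
    _ ≤ Real.sqrt t := Real.sqrt_le_sqrt (Finset.single_le_sum
        (fun j _ => Complex.normSq_nonneg ((resB A z)⁻¹ j i)) (Finset.mem_univ i))
  rw [him] at h1
  have hss : Real.sqrt t * Real.sqrt t = t := Real.mul_self_sqrt htpos.le
  have hstpos : 0 < Real.sqrt t := Real.sqrt_pos.mpr htpos
  have h3 : z.im * Real.sqrt t ≤ 1 := by nlinarith
  have h4 : Real.sqrt t ≤ (z.im)⁻¹ := by
    rw [le_inv_comm₀ hstpos hz]
    have hinv : (Real.sqrt t)⁻¹ * Real.sqrt t = 1 := inv_mul_cancel₀ hstpos.ne'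
    nlinarith
  calc t = Real.sqrt t * Real.sqrt t := hss.symm
  _ ≤ (z.im)⁻¹ * (z.im)⁻¹ := mul_le_mul h4 h4 hstpos.le (by positivity)
  _ = (z.im)⁻¹ ^ 2 := (sq _).symm

lemma resB_inv_symm (hA : A.IsSymm) : ((resB A z)⁻¹)ᵀ = (resB A z)⁻¹ := by
  have hBs : (resB A z)ᵀ = resB A z := by
    unfold resB
    rw [transpose_sub, transpose_smul, transpose_one, ← Matrix.transpose_map]
    rw [show Aᵀ = A from hA]
  have h := Matrix.transpose_nonsing_inv (resB A z)
  rw [hBs] at h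
  exact h

end Aux

lemma res_diff {N : ℕ} (z : ℂ) (M : Matrix (Fin N) (Fin N) ℝ) (hM : M.IsSymm) (hz : z.im ≠ 0)
    (v w : Fin N → ℝ) (i : Fin N) :
    (resB (M + diagonal v) z)⁻¹ i i - (resB (M + diagonal w) z)⁻¹ i i
      = ∑ k, (resB (M + diagonal v) z)⁻¹ i k * ((w k - v k : ℝ) : ℂ)
          * (resB (M + diagonal w) z)⁻¹ k i := by
  have hAv : (M + diagonal v).IsSymm := hM.add (isSymm_diagonal v)
  have hAw : (M + diagonal w).IsSymm := hM.add (isSymm_diagonal w)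
  set Sv := (resB (M + diagonal v) z)⁻¹
  set Sw := (resB (M + diagonal w) z)⁻¹
  set D : Matrix (Fin N) (Fin N) ℂ := diagonal (fun k => ((w k - v k : ℝ) : ℂ)) with hD
  have hBdiff : resB (M + diagonal w) z - resB (M + diagonal v) z = D := by
    ext i j
    by_cases h : i = j
    · subst h
      simp [resB, Matrix.map_apply, Matrix.diagonal_apply_eq, hD]
    · simp [resB, Matrix.map_apply, Matrix.diagonal_apply_ne _ h, hD]
  have hkey : Sv - Sw = Sv * D * Sw := by
    rw [← hBdiff, Matrix.mul_sub, Matrix.sub_mul]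
    rw [Matrix.mul_assoc Sv _ Sw, resB_mul_inv _ z hAw hz, Matrix.mul_one]
    rw [resB_inv_mul _ z hAv hz, Matrix.one_mul]
  have := congrFun (congrFun hkey i) i
  simp only [Matrix.sub_apply] at this
  rw [this, Matrix.mul_assoc, Matrix.mul_apply]
  refine Finset.sum_congr rfl fun k _ => ?_
  rw [Matrix.diagonal_mul]
  ring

lemma rpow_lip {c s : ℝ} (hc : 0 < c) (hs : 1 ≤ s) {x y : ℝ}
    (hx : x ∈ Set.Ioc (0:ℝ) c) (hy : y ∈ Set.Ioc (0:ℝ) c) :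
    |x ^ s - y ^ s| ≤ s * c ^ (s - 1) * |x - y| := by
  have hconv : Convex ℝ (Set.Ioc (0:ℝ) c) := convex_Ioc 0 c
  have hder : ∀ t ∈ Set.Ioc (0:ℝ) c,
      HasDerivWithinAt (fun u : ℝ => u ^ s) (s * t ^ (s - 1)) (Set.Ioc (0:ℝ) c) t := by
    intro t ht
    exact (Real.hasDerivAt_rpow_const (Or.inl ht.1.ne')).hasDerivWithinAt
  have hbound : ∀ t ∈ Set.Ioc (0:ℝ) c, ‖s * t ^ (s - 1)‖ ≤ s * c ^ (s - 1) := by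
    intro t ht
    rw [Real.norm_eq_abs, abs_of_nonneg
      (mul_nonneg (by linarith) (Real.rpow_nonneg ht.1.le _))]
    have : t ^ (s - 1) ≤ c ^ (s - 1) :=
      Real.rpow_le_rpow ht.1.le ht.2 (by linarith)
    nlinarith
  have := hconv.norm_image_sub_le_of_norm_hasDerivWithin_le hder hbound hy hx
  simpa [Real.norm_eq_abs] using this

theorem stmt7 (N : ℕ) (hN : 1 ≤ N) (M : Matrix (Fin N) (Fin N) ℝ) (hM : M.IsSymm)
    (s : ℝ) (hs : 1 ≤ s) (E η : ℝ) (hη : 0 < η) :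
    ∀ v w : EuclideanSpace ℝ (Fin N),
      |(1 / (N : ℝ)) * ∑ i, (resS M (E + η * Complex.I) (fun i => v i) i i).im ^ s -
          (1 / (N : ℝ)) * ∑ i, (resS M (E + η * Complex.I) (fun i => w i) i i).im ^ s| ≤
        s / (η ^ (s + 1) * Real.sqrt N) * ‖v - w‖ := by
  intro v w
  set z : ℂ := (E : ℂ) + (η : ℝ) * Complex.I with hzdef
  have hzim : z.im = η := by simp [hzdef]
  have hzim' : z.im ≠ 0 := by rw [hzim]; exact hη.ne'
  have hzpos : 0 < z.im := by rw [hzim]; exact hη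
  set vv : Fin N → ℝ := fun i => v i with hvv
  set ww : Fin N → ℝ := fun i => w i with hww
  have hAv : (M + diagonal vv).IsSymm := hM.add (isSymm_diagonal vv)
  have hAw : (M + diagonal ww).IsSymm := hM.add (isSymm_diagonal ww)
  set Sv : Matrix (Fin N) (Fin N) ℂ := (resB (M + diagonal vv) z)⁻¹ with hSv
  set Sw : Matrix (Fin N) (Fin N) ℂ := (resB (M + diagonal ww) z)⁻¹ with hSw
  have hresv : resS M z vv = Sv := rfl
  have hresw : resS M z ww = Sw := rfl
  -- diagonal imaginary parts
  set xv : Fin N → ℝ := fun i => (Sv i i).im with hxv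
  set xw : Fin N → ℝ := fun i => (Sw i i).im with hxw
  have hxv_mem : ∀ i, xv i ∈ Set.Ioc (0:ℝ) η⁻¹ := by
    intro i
    have h1 := im_diag_eq (M + diagonal vv) z hAv hzim' i
    have h2 := col_pos (M + diagonal vv) z hAv hzim' i
    have h3 := col_le (M + diagonal vv) z hAv hzpos i
    rw [hzim] at h1 h3
    constructor
    · rw [hxv]; simp only; rw [h1]; positivity
    · rw [hxv]; simp only; rw [h1]
      have : η * (η⁻¹ ^ 2) = η⁻¹ := by field_simp
      nlinarith
  have hxw_mem : ∀ i, xw i ∈ Set.Ioc (0:ℝ) η⁻¹ := by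
    intro i
    have h1 := im_diag_eq (M + diagonal ww) z hAw hzim' i
    have h2 := col_pos (M + diagonal ww) z hAw hzim' i
    have h3 := col_le (M + diagonal ww) z hAw hzpos i
    rw [hzim] at h1 h3
    constructor
    · rw [hxw]; simp only; rw [h1]; positivity
    · rw [hxw]; simp only; rw [h1]
      have : η * (η⁻¹ ^ 2) = η⁻¹ := by field_simp
      nlinarith
  -- the entry differences
  set a : Fin N → ℝ := fun i => ‖Sv i i - Sw i i‖ with ha
  have him_le : ∀ i, |xv i - xw i| ≤ a i := by
    intro i
    have : xv i - xw i = (Sv i i - Sw i i).im := by simp [hxv, hxw]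
    rw [this]
    exact Complex.abs_im_le_norm _
  -- row sums (via symmetry + column bounds)
  have hrow_v : ∀ i, ∑ k, ‖Sv i k‖ ^ 2 ≤ η⁻¹ ^ 2 := by
    intro i
    have hsym := resB_inv_symm (M + diagonal vv) z hAv
    have : ∀ k, Sv i k = Sv k i := fun k => by
      simpa using congrFun (congrFun hsym k) i
    calc ∑ k, ‖Sv i k‖ ^ 2 = ∑ k, Complex.normSq (Sv k i) := by
          refine Finset.sum_congr rfl fun k _ => ?_
          rw [this k, Complex.sq_norm]
      _ ≤ η⁻¹ ^ 2 := by
          have := col_le (M + diagonal vv) z hAv hzpos i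
          rwa [hzim] at this
  have hcol_w : ∀ k, ∑ i, ‖Sw k i‖ ^ 2 ≤ η⁻¹ ^ 2 := by
    intro k
    have hsym := resB_inv_symm (M + diagonal ww) z hAw
    have : ∀ i, Sw k i = Sw i k := fun i => by
      simpa using congrFun (congrFun hsym i) k
    calc ∑ i, ‖Sw k i‖ ^ 2 = ∑ i, Complex.normSq (Sw i k) := by
          refine Finset.sum_congr rfl fun i _ => ?_
          rw [this i, Complex.sq_norm]
      _ ≤ η⁻¹ ^ 2 := by
          have := col_le (M + diagonal ww) z hAw hzpos k
          rwa [hzim] at this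
  -- bound on a i
  have ha_le : ∀ i, a i ≤ ∑ k, ‖Sv i k‖ * (|vv k - ww k| * ‖Sw k i‖) := by
    intro i
    rw [ha]; simp only
    rw [res_diff z M hM hzim' vv ww i]
    refine le_trans (norm_sum_le _ _) ?_
    refine Finset.sum_congr rfl (fun k _ => ?_) |>.le
    rw [norm_mul, norm_mul, Complex.norm_real, Real.norm_eq_abs, abs_sub_comm]
    ring
  have ha_nonneg : ∀ i, 0 ≤ a i := fun i => norm_nonneg _
  -- Cauchy-Schwarz in k
  have ha2 : ∀ i, a i ^ 2 ≤ η⁻¹ ^ 2 * ∑ k, (vv k - ww k) ^ 2 * ‖Sw k i‖ ^ 2 := by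
    intro i
    have h1 : a i ^ 2 ≤ (∑ k, ‖Sv i k‖ * (|vv k - ww k| * ‖Sw k i‖)) ^ 2 :=
      pow_le_pow_left₀ (ha_nonneg i) (ha_le i) 2
    have h2 := Finset.sum_mul_sq_le_sq_mul_sq Finset.univ
      (fun k => ‖Sv i k‖) (fun k => |vv k - ww k| * ‖Sw k i‖)
    have h3 : (∑ k, (|vv k - ww k| * ‖Sw k i‖) ^ 2)
        = ∑ k, (vv k - ww k) ^ 2 * ‖Sw k i‖ ^ 2 := by
      refine Finset.sum_congr rfl fun k _ => ?_
      rw [mul_pow, sq_abs]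
    have h4 : 0 ≤ ∑ k, (vv k - ww k) ^ 2 * ‖Sw k i‖ ^ 2 :=
      Finset.sum_nonneg fun k _ => by positivity
    calc a i ^ 2 ≤ (∑ k, ‖Sv i k‖ ^ 2)
          * ∑ k, (|vv k - ww k| * ‖Sw k i‖) ^ 2 := le_trans h1 h2
      _ ≤ η⁻¹ ^ 2 * ∑ k, (vv k - ww k) ^ 2 * ‖Sw k i‖ ^ 2 := by
          rw [h3]
          exact mul_le_mul_of_nonneg_right (hrow_v i) h4
  -- sum over i
  have hnormsq : ∑ k, (vv k - ww k) ^ 2 = ‖v - w‖ ^ 2 := by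
    rw [EuclideanSpace.norm_eq, Real.sq_sqrt (Finset.sum_nonneg fun i _ => by positivity)]
    refine Finset.sum_congr rfl fun k _ => ?_
    simp [hvv, hww, Real.norm_eq_abs, sq_abs]
  have hsum2 : ∑ i, a i ^ 2 ≤ η⁻¹ ^ 2 * η⁻¹ ^ 2 * ‖v - w‖ ^ 2 := by
    calc ∑ i, a i ^ 2
        ≤ ∑ i, η⁻¹ ^ 2 * ∑ k, (vv k - ww k) ^ 2 * ‖Sw k i‖ ^ 2 :=
          Finset.sum_le_sum fun i _ => ha2 i
      _ = η⁻¹ ^ 2 * ∑ k, (vv k - ww k) ^ 2 * ∑ i, ‖Sw k i‖ ^ 2 := by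
          rw [← Finset.mul_sum, Finset.sum_comm]
          congr 1
          refine Finset.sum_congr rfl fun k _ => ?_
          rw [Finset.mul_sum]
      _ ≤ η⁻¹ ^ 2 * ∑ k, (vv k - ww k) ^ 2 * η⁻¹ ^ 2 := by
          refine mul_le_mul_of_nonneg_left (Finset.sum_le_sum fun k _ => ?_) (by positivity)
          exact mul_le_mul_of_nonneg_left (hcol_w k) (by positivity)
      _ = η⁻¹ ^ 2 * η⁻¹ ^ 2 * ∑ k, (vv k - ww k) ^ 2 := by
          rw [← Finset.sum_mul]; ring
      _ = η⁻¹ ^ 2 * η⁻¹ ^ 2 * ‖v - w‖ ^ 2 := by rw [hnormsq]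
  have hsqN : (0:ℝ) < Real.sqrt N := Real.sqrt_pos.mpr (by exact_mod_cast Nat.pos_of_ne_zero (by omega))
  have hsumA : ∑ i, a i ≤ Real.sqrt N * (η⁻¹ * η⁻¹ * ‖v - w‖) := by
    have hCS := Finset.sum_mul_sq_le_sq_mul_sq Finset.univ (fun _ : Fin N => (1:ℝ)) a
    simp only [one_pow, one_mul, Finset.sum_const, Finset.card_univ, Fintype.card_fin,
      nsmul_eq_mul, mul_one] at hCS
    have h1 : (∑ i, a i) ^ 2 ≤ (N : ℝ) * (η⁻¹ ^ 2 * η⁻¹ ^ 2 * ‖v - w‖ ^ 2) :=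
      le_trans hCS (mul_le_mul_of_nonneg_left hsum2 (Nat.cast_nonneg N))
    have h2 : (N : ℝ) * (η⁻¹ ^ 2 * η⁻¹ ^ 2 * ‖v - w‖ ^ 2)
        = (Real.sqrt N * (η⁻¹ * η⁻¹ * ‖v - w‖)) ^ 2 := by
      rw [mul_pow, Real.sq_sqrt (Nat.cast_nonneg N)]
      ring
    rw [h2] at h1
    calc ∑ i, a i = Real.sqrt ((∑ i, a i) ^ 2) :=
          (Real.sqrt_sq (Finset.sum_nonneg fun i _ => ha_nonneg i)).symm
      _ ≤ Real.sqrt ((Real.sqrt N * (η⁻¹ * η⁻¹ * ‖v - w‖)) ^ 2) := Real.sqrt_le_sqrt h1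
      _ = Real.sqrt N * (η⁻¹ * η⁻¹ * ‖v - w‖) := Real.sqrt_sq (by positivity)
  -- final chain
  have hηinv : (0:ℝ) < η⁻¹ := by positivity
  have hfinal1 : |(1 / (N : ℝ)) * ∑ i, xv i ^ s - (1 / (N : ℝ)) * ∑ i, xw i ^ s|
      ≤ (1 / (N:ℝ)) * (s * η⁻¹ ^ (s - 1)) * ∑ i, a i := by
    rw [← mul_sub, ← Finset.sum_sub_distrib, abs_mul,
      abs_of_nonneg (by positivity : (0:ℝ) ≤ 1 / (N:ℝ))]
    rw [mul_assoc]
    refine mul_le_mul_of_nonneg_left ?_ (by positivity)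
    calc |∑ i, (xv i ^ s - xw i ^ s)| ≤ ∑ i, |xv i ^ s - xw i ^ s| :=
          Finset.abs_sum_le_sum_abs _ _
      _ ≤ ∑ i, s * η⁻¹ ^ (s - 1) * |xv i - xw i| :=
          Finset.sum_le_sum fun i _ => rpow_lip hηinv hs (hxv_mem i) (hxw_mem i)
      _ ≤ ∑ i, s * η⁻¹ ^ (s - 1) * a i := by
          refine Finset.sum_le_sum fun i _ => ?_
          refine mul_le_mul_of_nonneg_left (him_le i) ?_
          have := Real.rpow_nonneg hηinv.le (s - 1)
          nlinarith [hs]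
      _ = s * η⁻¹ ^ (s - 1) * ∑ i, a i := by rw [← Finset.mul_sum]
  have hfinal2 : (1 / (N:ℝ)) * (s * η⁻¹ ^ (s - 1)) * ∑ i, a i
      ≤ (1 / (N:ℝ)) * (s * η⁻¹ ^ (s - 1)) * (Real.sqrt N * (η⁻¹ * η⁻¹ * ‖v - w‖)) := by
    refine mul_le_mul_of_nonneg_left hsumA ?_
    have := Real.rpow_nonneg hηinv.le (s - 1)
    have hs0 : (0:ℝ) ≤ s := by linarith
    positivity
  have hfinalEq : (1 / (N:ℝ)) * (s * η⁻¹ ^ (s - 1)) * (Real.sqrt N * (η⁻¹ * η⁻¹ * ‖v - w‖))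
      = s / (η ^ (s + 1) * Real.sqrt N) * ‖v - w‖ := by
    have hNsplit : (N:ℝ) = Real.sqrt N * Real.sqrt N := (Real.mul_self_sqrt (Nat.cast_nonneg N)).symm
    have hinv_pow : η⁻¹ ^ (s - 1) = (η ^ (s - 1))⁻¹ := Real.inv_rpow hη.le (s - 1)
    have hη_split : η ^ (s + 1) = η ^ (s - 1) * (η * η) := by
      rw [show s + 1 = (s - 1) + 2 by ring, Real.rpow_add hη,
        show (2:ℝ) = ((2:ℕ):ℝ) by norm_num, Real.rpow_natCast]
      ring
    have hP : (0:ℝ) < η ^ (s - 1) := Real.rpow_pos_of_pos hη _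
    rw [hinv_pow, hη_split, hNsplit]
    have h1 : Real.sqrt N ≠ 0 := hsqN.ne'
    have h2 : η ≠ 0 := hη.ne'
    have h3 : η ^ (s - 1) ≠ 0 := hP.ne'
    field_simp
    rw [Real.sqrt_sq hsqN.le, Real.sq_sqrt (Nat.cast_nonneg N)]
  calc |(1 / (N : ℝ)) * ∑ i, (resS M z (fun i => v i) i i).im ^ s -
          (1 / (N : ℝ)) * ∑ i, (resS M z (fun i => w i) i i).im ^ s|
      = |(1 / (N : ℝ)) * ∑ i, xv i ^ s - (1 / (N : ℝ)) * ∑ i, xw i ^ s| := by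
        rw [show (fun i => v i) = vv from rfl, show (fun i => w i) = ww from rfl,
          hresv, hresw]
    _ ≤ (1 / (N:ℝ)) * (s * η⁻¹ ^ (s - 1)) * ∑ i, a i := hfinal1
    _ ≤ (1 / (N:ℝ)) * (s * η⁻¹ ^ (s - 1)) * (Real.sqrt N * (η⁻¹ * η⁻¹ * ‖v - w‖)) := hfinal2
    _ = s / (η ^ (s + 1) * Real.sqrt N) * ‖v - w‖ := hfinalEq
end
end

section
/- Fix an integer N ≥ 1, an N×N real symmetric matrix M, s ∈ (0,1), z = E + iη with η > 0, and δ ∈ (0, η^{−1}]. For v ∈ ℝ^N let S(v) = (M + diag(v) − z·Id)^{−1}, and define F_{s,δ}(v) = (1/N)·∑_{i=1}^N (max(Im S(v)_{ii}, δ))^s. Then F_{s,δ} is Lipschitz on ℝ^N with respect to the Euclidean norm, with Lipschitz constant (s·δ^{s−1})/(η²·√N). -/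
open Matrix
open scoped Real ComplexConjugate

noncomputable section

namespace Stmt8Aux

/-- Cauchy–Schwarz for complex sums. -/
lemma cs_abs {N : ℕ} (x y : Fin N → ℂ) :
    ‖∑ i, (starRingEnd ℂ) (x i) * y i‖ ≤
      Real.sqrt (∑ i, Complex.normSq (x i)) * Real.sqrt (∑ i, Complex.normSq (y i)) := by
  calc ‖∑ i, (starRingEnd ℂ) (x i) * y i‖
      ≤ ∑ i, ‖(starRingEnd ℂ) (x i) * y i‖ := norm_sum_le _ _
    _ = ∑ i, ‖x i‖ * ‖y i‖ := by
        simp [_root_.map_mul]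
    _ ≤ Real.sqrt (∑ i, ‖x i‖ ^ 2) * Real.sqrt (∑ i, ‖y i‖ ^ 2) :=
        Real.sum_mul_le_sqrt_mul_sqrt _ _ _
    _ = Real.sqrt (∑ i, Complex.normSq (x i)) * Real.sqrt (∑ i, Complex.normSq (y i)) := by
        simp [Complex.sq_norm]

lemma quad_im {N : ℕ} (A : Matrix (Fin N) (Fin N) ℝ) (hA : A.IsSymm) (x : Fin N → ℂ) :
    (∑ i, (starRingEnd ℂ) (x i) * ((A.map (fun r => (r : ℂ))) *ᵥ x) i).im = 0 := by
  have hexp : (∑ i, (starRingEnd ℂ) (x i) * ((A.map (fun r => (r : ℂ))) *ᵥ x) i)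
      = ∑ i, ∑ j, ((A i j : ℂ)) * ((starRingEnd ℂ) (x i) * x j) := by
    simp only [Matrix.mulVec, dotProduct, Matrix.map_apply, Finset.mul_sum]
    exact Finset.sum_congr rfl fun i _ => Finset.sum_congr rfl fun j _ => by ring
  rw [hexp, Complex.im_sum]
  have hterm : ∀ i j : Fin N, ((A i j : ℂ) * ((starRingEnd ℂ) (x i) * x j)).im
      = A i j * ((starRingEnd ℂ) (x i) * x j).im := by
    intro i j; simp [Complex.mul_im]
  simp only [Complex.im_sum, hterm]
  set T := ∑ i, ∑ j, A i j * ((starRingEnd ℂ) (x i) * x j).im with hTdef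
  have hT : T = -T := by
    calc T = ∑ j, ∑ i, A i j * ((starRingEnd ℂ) (x i) * x j).im := Finset.sum_comm
      _ = ∑ i, ∑ j, -(A i j * ((starRingEnd ℂ) (x i) * x j).im) := by
          refine Finset.sum_congr rfl fun i _ => Finset.sum_congr rfl fun j _ => ?_
          rw [hA.apply]
          have h2 : (starRingEnd ℂ) (x j) * x i
              = (starRingEnd ℂ) ((starRingEnd ℂ) (x i) * x j) := by
            rw [_root_.map_mul, Complex.conj_conj]; ring
          rw [h2, Complex.conj_im]; ring
      _ = -T := by rw [hTdef]; simp
  linarith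

/-- Core lemma: invertibility and column bounds for the shifted matrix. -/
lemma key {N : ℕ} (A : Matrix (Fin N) (Fin N) ℝ) (hA : A.IsSymm) (ζ : ℂ) (hζ : ζ.im ≠ 0) :
    IsUnit ((A.map (fun r => (r : ℂ))) - ζ • 1).det ∧
    ∀ k, ∑ i, Complex.normSq (((A.map (fun r => (r : ℂ))) - ζ • 1)⁻¹ i k) ≤ 1 / ζ.im ^ 2 := by
  set B := (A.map (fun r => (r : ℂ))) - ζ • 1 with hB
  -- imaginary part of the quadratic form
  have him : ∀ x : Fin N → ℂ,
      (∑ i, (starRingEnd ℂ) (x i) * (B *ᵥ x) i).im = -ζ.im * ∑ i, Complex.normSq (x i) := by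
    intro x
    have hmv : B *ᵥ x = (A.map (fun r => (r : ℂ))) *ᵥ x - ζ • x := by
      rw [hB, Matrix.sub_mulVec, Matrix.smul_mulVec, Matrix.one_mulVec]
    have : (∑ i, (starRingEnd ℂ) (x i) * (B *ᵥ x) i)
        = (∑ i, (starRingEnd ℂ) (x i) * ((A.map (fun r => (r : ℂ))) *ᵥ x) i)
          - ζ * ∑ i, ((Complex.normSq (x i) : ℝ) : ℂ) := by
      rw [hmv]
      rw [Finset.mul_sum]
      rw [← Finset.sum_sub_distrib]
      refine Finset.sum_congr rfl fun i _ => ?_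
      simp only [Pi.sub_apply, Pi.smul_apply, smul_eq_mul]
      rw [mul_sub]
      congr 1
      rw [Complex.normSq_eq_conj_mul_self]
      ring
    rw [this, Complex.sub_im, quad_im A hA x]
    have hre : (∑ i, ((Complex.normSq (x i) : ℝ) : ℂ)) = ((∑ i, Complex.normSq (x i) : ℝ) : ℂ) := by
      push_cast; ring
    rw [hre]
    simp [Complex.mul_im]
  -- lower bound
  have hlow : ∀ x : Fin N → ℂ,
      ζ.im ^ 2 * (∑ i, Complex.normSq (x i)) ≤ ∑ i, Complex.normSq ((B *ᵥ x) i) := by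
    intro x
    set n := ∑ i, Complex.normSq (x i) with hn
    set m := ∑ i, Complex.normSq ((B *ᵥ x) i) with hm
    have hn0 : 0 ≤ n := Finset.sum_nonneg fun i _ => Complex.normSq_nonneg _
    have hm0 : 0 ≤ m := Finset.sum_nonneg fun i _ => Complex.normSq_nonneg _
    have habs : |ζ.im| * n ≤ Real.sqrt n * Real.sqrt m := by
      have h1 : |(∑ i, (starRingEnd ℂ) (x i) * (B *ᵥ x) i).im| = |ζ.im| * n := by
        rw [him x, abs_mul, abs_neg, abs_of_nonneg hn0]
      calc |ζ.im| * n = |(∑ i, (starRingEnd ℂ) (x i) * (B *ᵥ x) i).im| := h1.symm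
        _ ≤ ‖∑ i, (starRingEnd ℂ) (x i) * (B *ᵥ x) i‖ := Complex.abs_im_le_norm _
        _ ≤ Real.sqrt n * Real.sqrt m := cs_abs x (B *ᵥ x)
    rcases eq_or_lt_of_le hn0 with h | h
    · rw [← h]; simpa using hm0
    · have hsq : (|ζ.im| * n) ^ 2 ≤ (Real.sqrt n * Real.sqrt m) ^ 2 := by
        have := mul_le_mul habs habs (by positivity) (by positivity)
        calc (|ζ.im| * n) ^ 2 = (|ζ.im| * n) * (|ζ.im| * n) := sq _
          _ ≤ (Real.sqrt n * Real.sqrt m) * (Real.sqrt n * Real.sqrt m) := this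
          _ = (Real.sqrt n * Real.sqrt m) ^ 2 := (sq _).symm
      rw [mul_pow, sq_abs, mul_pow, Real.sq_sqrt hn0, Real.sq_sqrt hm0] at hsq
      nlinarith
  -- invertibility
  have hunit : IsUnit B.det := by
    rw [isUnit_iff_ne_zero]
    intro hdet
    obtain ⟨x, hx0, hx⟩ := (Matrix.exists_mulVec_eq_zero_iff).2 hdet
    have hxpos : 0 < ∑ i, Complex.normSq (x i) := by
      obtain ⟨i, hi⟩ := Function.ne_iff.1 hx0
      have h1 : 0 < Complex.normSq (x i) := Complex.normSq_pos.2 (by simpa using hi)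
      exact lt_of_lt_of_le h1 (Finset.single_le_sum (fun j _ => Complex.normSq_nonneg _)
        (Finset.mem_univ i))
    have := hlow x
    rw [hx] at this
    simp only [Pi.zero_apply, Complex.normSq_zero, Finset.sum_const, smul_zero] at this
    have hζ2 : 0 < ζ.im ^ 2 := by positivity
    nlinarith
  refine ⟨hunit, fun k => ?_⟩
  set x : Fin N → ℂ := B⁻¹ *ᵥ Pi.single k 1 with hxdef
  have hBx : B *ᵥ x = Pi.single k 1 := by
    rw [hxdef, Matrix.mulVec_mulVec, Matrix.mul_nonsing_inv _ hunit, Matrix.one_mulVec]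
  have hxk : ∀ i, x i = B⁻¹ i k := by
    intro i
    rw [hxdef, Matrix.mulVec_single]
    exact mul_one _
  have hsingle : ∑ i, Complex.normSq ((B *ᵥ x) i) = 1 := by
    rw [hBx]
    rw [Fintype.sum_eq_single k (fun j hj => by simp [Pi.single_apply, hj])]
    simp
  have h1 := hlow x
  rw [hsingle] at h1
  have hζ2 : 0 < ζ.im ^ 2 := by positivity
  rw [le_div_iff₀ hζ2]
  calc (∑ i, Complex.normSq (B⁻¹ i k)) * ζ.im ^ 2
      = ζ.im ^ 2 * ∑ i, Complex.normSq (x i) := by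
        rw [mul_comm]; congr 1; exact Finset.sum_congr rfl fun i _ => by rw [hxk i]
    _ ≤ 1 := h1

/-- Scalar Lipschitz bound for `t ↦ max t δ ^ s`. -/
lemma rpow_lip {s δ : ℝ} (hs0 : 0 < s) (hs1 : s < 1) (hδ : 0 < δ) (a b : ℝ) :
    |max a δ ^ s - max b δ ^ s| ≤ s * δ ^ (s - 1) * |a - b| := by
  have hC : 0 ≤ s * δ ^ (s - 1) := by positivity
  have hkey : ∀ x y : ℝ, δ ≤ x → δ ≤ y → |x ^ s - y ^ s| ≤ s * δ ^ (s - 1) * |x - y| := by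
    intro x y hx hy
    have hmvt := (convex_Ici δ).norm_image_sub_le_of_norm_hasDerivWithin_le
      (f := fun t : ℝ => t ^ s) (f' := fun t => s * t ^ (s - 1)) (C := s * δ ^ (s - 1))
      (fun t ht => (Real.hasDerivAt_rpow_const (p := s)
        (Or.inl (ne_of_gt (lt_of_lt_of_le hδ ht)))).hasDerivWithinAt)
      (fun t ht => by
        have htpos : 0 < t := lt_of_lt_of_le hδ ht
        have h2 : t ^ (s - 1) ≤ δ ^ (s - 1) :=
          Real.rpow_le_rpow_of_nonpos hδ ht (by linarith)
        have h3 : 0 ≤ t ^ (s - 1) := le_of_lt (Real.rpow_pos_of_pos htpos _)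
        rw [Real.norm_eq_abs, abs_of_nonneg (by positivity)]
        exact mul_le_mul_of_nonneg_left h2 (le_of_lt hs0))
      hy hx
    simpa [Real.norm_eq_abs] using hmvt
  calc |max a δ ^ s - max b δ ^ s|
      ≤ s * δ ^ (s - 1) * |max a δ - max b δ| :=
        hkey _ _ (le_max_right _ _) (le_max_right _ _)
    _ ≤ s * δ ^ (s - 1) * |a - b| :=
        mul_le_mul_of_nonneg_left (abs_max_sub_max_le_abs a b δ) hC


/-- Sum of imaginary-part differences of diagonal resolvent entries. -/
lemma sum_im_diff_le {N : ℕ} (M : Matrix (Fin N) (Fin N) ℝ) (hM : M.IsSymm)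
    (ζ : ℂ) (hζ : ζ.im ≠ 0) (v w : Fin N → ℝ) :
    ∑ i, |(resS M ζ v i i).im - (resS M ζ w i i).im| ≤
      (1 / ζ.im ^ 2) * ∑ k, |v k - w k| := by
  classical
  simp only [resS]
  set Av := M + Matrix.diagonal v with hAv'
  set Aw := M + Matrix.diagonal w with hAw'
  set Bv := (Av.map (fun x => (x : ℂ))) - ζ • 1 with hBv
  set Bw := (Aw.map (fun x => (x : ℂ))) - ζ • 1 with hBw
  have hAv : Av.IsSymm := hM.add (Matrix.isSymm_diagonal v)
  have hAw : Aw.IsSymm := hM.add (Matrix.isSymm_diagonal w)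
  obtain ⟨huv, hcolv⟩ := Stmt8Aux.key Av hAv ζ hζ
  obtain ⟨huw, hcolw⟩ := Stmt8Aux.key Aw hAw ζ hζ
  rw [← hBv] at huv hcolv
  rw [← hBw] at huw hcolw
  have hconj : ((starRingEnd ℂ) ζ).im ≠ 0 := by
    rw [Complex.conj_im]; exact neg_ne_zero.2 hζ
  obtain ⟨-, hcolw'⟩ := Stmt8Aux.key Aw hAw ((starRingEnd ℂ) ζ) hconj
  have hBwH : Bwᴴ = (Aw.map (fun x => (x : ℂ))) - ((starRingEnd ℂ) ζ) • 1 := by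
    rw [hBw, Matrix.conjTranspose_sub, Matrix.conjTranspose_smul, Matrix.conjTranspose_one]
    congr 1
    ext i j
    simp [Matrix.conjTranspose_apply, Matrix.map_apply, hAw.apply]
  have hrow : ∀ k, ∑ i, Complex.normSq (Bw⁻¹ k i) ≤ 1 / ζ.im ^ 2 := by
    intro k
    have h1 := hcolw' k
    rw [← hBwH, ← Matrix.conjTranspose_nonsing_inv] at h1
    calc ∑ i, Complex.normSq (Bw⁻¹ k i)
        = ∑ i, Complex.normSq ((Bw⁻¹)ᴴ i k) := by
          refine Finset.sum_congr rfl fun i _ => ?_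
          simp [Matrix.conjTranspose_apply, ← starRingEnd_apply, Complex.normSq_conj]
      _ ≤ 1 / ((starRingEnd ℂ) ζ).im ^ 2 := h1
      _ = 1 / ζ.im ^ 2 := by rw [Complex.conj_im]; ring
  have hBsub : Bw - Bv = Matrix.diagonal (fun k => ((w k - v k : ℝ) : ℂ)) := by
    rw [hBw, hBv, hAv', hAw']
    ext i j
    by_cases h : i = j
    · subst h
      simp only [Matrix.sub_apply, Matrix.map_apply, Matrix.add_apply,
        Matrix.diagonal_apply_eq, Matrix.smul_apply, Matrix.one_apply_eq, smul_eq_mul]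
      push_cast
      ring
    · simp only [Matrix.sub_apply, Matrix.map_apply, Matrix.add_apply,
        Matrix.diagonal_apply_ne _ h, Matrix.smul_apply, Matrix.one_apply_ne h, smul_eq_mul]
      push_cast
      ring
  have hid : Bv⁻¹ - Bw⁻¹ = Bv⁻¹ * (Bw - Bv) * Bw⁻¹ := by
    have h1 : Bw * Bw⁻¹ = 1 := Matrix.mul_nonsing_inv _ huw
    have h2 : Bv⁻¹ * Bv = 1 := Matrix.nonsing_inv_mul _ huv
    have h3 : Bv⁻¹ * (Bw - Bv) * Bw⁻¹ = Bv⁻¹ * (Bw * Bw⁻¹) - Bv⁻¹ * Bv * Bw⁻¹ := by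
      noncomm_ring
    rw [h3, h1, h2, Matrix.mul_one, Matrix.one_mul]
  have hentry : ∀ i, (Bv⁻¹ i i).im - (Bw⁻¹ i i).im
      = (∑ k, Bv⁻¹ i k * ((w k - v k : ℝ) : ℂ) * Bw⁻¹ k i).im := by
    intro i
    have h3 : (Bv⁻¹ - Bw⁻¹) i i = ∑ k, Bv⁻¹ i k * ((w k - v k : ℝ) : ℂ) * Bw⁻¹ k i := by
      rw [hid, hBsub, Matrix.mul_apply]
      exact Finset.sum_congr rfl fun k _ => by rw [Matrix.mul_diagonal]
    simpa [Matrix.sub_apply, Complex.sub_im] using congrArg Complex.im h3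
  calc ∑ i, |(Bv⁻¹ i i).im - (Bw⁻¹ i i).im|
      ≤ ∑ i, ∑ k, ‖Bv⁻¹ i k‖ * |w k - v k| * ‖Bw⁻¹ k i‖ := by
        refine Finset.sum_le_sum fun i _ => ?_
        rw [hentry i]
        calc |(∑ k, Bv⁻¹ i k * ((w k - v k : ℝ) : ℂ) * Bw⁻¹ k i).im|
            ≤ ‖∑ k, Bv⁻¹ i k * ((w k - v k : ℝ) : ℂ) * Bw⁻¹ k i‖ :=
              Complex.abs_im_le_norm _
          _ ≤ ∑ k, ‖Bv⁻¹ i k * ((w k - v k : ℝ) : ℂ) * Bw⁻¹ k i‖ :=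
              norm_sum_le _ _
          _ = ∑ k, ‖Bv⁻¹ i k‖ * |w k - v k| * ‖Bw⁻¹ k i‖ := by
              refine Finset.sum_congr rfl fun k _ => ?_
              rw [norm_mul, norm_mul, Complex.norm_real, Real.norm_eq_abs]
    _ = ∑ k, |w k - v k| * ∑ i, ‖Bv⁻¹ i k‖ * ‖Bw⁻¹ k i‖ := by
        rw [Finset.sum_comm]
        refine Finset.sum_congr rfl fun k _ => ?_
        rw [Finset.mul_sum]
        exact Finset.sum_congr rfl fun i _ => by ring
    _ ≤ ∑ k, |w k - v k| * (1 / ζ.im ^ 2) := by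
        refine Finset.sum_le_sum fun k _ => ?_
        refine mul_le_mul_of_nonneg_left ?_ (abs_nonneg _)
        calc ∑ i, ‖Bv⁻¹ i k‖ * ‖Bw⁻¹ k i‖
            ≤ Real.sqrt (∑ i, ‖Bv⁻¹ i k‖ ^ 2) *
                Real.sqrt (∑ i, ‖Bw⁻¹ k i‖ ^ 2) :=
              Real.sum_mul_le_sqrt_mul_sqrt _ _ _
          _ = Real.sqrt (∑ i, Complex.normSq (Bv⁻¹ i k)) *
                Real.sqrt (∑ i, Complex.normSq (Bw⁻¹ k i)) := by
              simp [Complex.sq_norm]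
          _ ≤ Real.sqrt (1 / ζ.im ^ 2) * Real.sqrt (1 / ζ.im ^ 2) := by
              gcongr
              · exact hcolv k
              · exact hrow k
          _ = 1 / ζ.im ^ 2 := Real.mul_self_sqrt (by positivity)
    _ = (1 / ζ.im ^ 2) * ∑ k, |v k - w k| := by
        rw [Finset.mul_sum]
        refine Finset.sum_congr rfl fun k _ => ?_
        rw [abs_sub_comm]
        ring

end Stmt8Aux


theorem stmt8 (N : ℕ) (hN : 1 ≤ N) (M : Matrix (Fin N) (Fin N) ℝ) (hM : M.IsSymm)
    (s : ℝ) (hs : s ∈ Set.Ioo (0 : ℝ) 1) (E η : ℝ) (hη : 0 < η)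
    (δ : ℝ) (hδ : δ ∈ Set.Ioc (0 : ℝ) η⁻¹) :
    ∀ v w : EuclideanSpace ℝ (Fin N),
      |(1 / (N : ℝ)) *
            ∑ i, max (resS M (E + η * Complex.I) (fun i => v i) i i).im δ ^ s -
          (1 / (N : ℝ)) *
            ∑ i, max (resS M (E + η * Complex.I) (fun i => w i) i i).im δ ^ s| ≤
        s * δ ^ (s - 1) / (η ^ 2 * Real.sqrt N) * ‖v - w‖ := by
  obtain ⟨hs0, hs1⟩ := hs
  obtain ⟨hδ0, -⟩ := hδ
  have hNpos : (0 : ℝ) < N := by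
    exact_mod_cast Nat.lt_of_lt_of_le Nat.zero_lt_one hN
  set z : ℂ := (E : ℂ) + (η : ℂ) * Complex.I with hz
  have hzim : z.im = η := by simp [hz]
  have hzim' : z.im ≠ 0 := by rw [hzim]; exact ne_of_gt hη
  intro v w
  have hC : 0 ≤ s * δ ^ (s - 1) := mul_nonneg hs0.le (Real.rpow_nonneg hδ0.le _)
  have hsum := Stmt8Aux.sum_im_diff_le M hM z hzim' (fun i => v i) (fun i => w i)
  rw [hzim] at hsum
  have hnorm : ∑ k, |v k - w k| ≤ Real.sqrt N * ‖v - w‖ := by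
    have hEuc : ‖v - w‖ = Real.sqrt (∑ k, |v k - w k| ^ 2) := by
      rw [EuclideanSpace.norm_eq]
      congr 1
    calc ∑ k, |v k - w k| = ∑ k, 1 * |v k - w k| := by simp
      _ ≤ Real.sqrt (∑ _k : Fin N, (1 : ℝ) ^ 2) * Real.sqrt (∑ k, |v k - w k| ^ 2) :=
          Real.sum_mul_le_sqrt_mul_sqrt _ _ _
      _ = Real.sqrt N * ‖v - w‖ := by
          rw [hEuc]
          congr 2
          simp
  have h3 : ∑ i, |(resS M z (fun i => v i) i i).im - (resS M z (fun i => w i) i i).im|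
      ≤ (1 / η ^ 2) * (Real.sqrt N * ‖v - w‖) :=
    le_trans hsum (mul_le_mul_of_nonneg_left hnorm (by positivity))
  have h2 : |∑ i, (max (resS M z (fun i => v i) i i).im δ ^ s
        - max (resS M z (fun i => w i) i i).im δ ^ s)|
      ≤ s * δ ^ (s - 1) *
        ∑ i, |(resS M z (fun i => v i) i i).im - (resS M z (fun i => w i) i i).im| := by
    calc |∑ i, (max (resS M z (fun i => v i) i i).im δ ^ s
          - max (resS M z (fun i => w i) i i).im δ ^ s)|
        ≤ ∑ i, |max (resS M z (fun i => v i) i i).im δ ^ s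
            - max (resS M z (fun i => w i) i i).im δ ^ s| :=
          Finset.abs_sum_le_sum_abs _ _
      _ ≤ ∑ i, s * δ ^ (s - 1) *
            |(resS M z (fun i => v i) i i).im - (resS M z (fun i => w i) i i).im| :=
          Finset.sum_le_sum fun i _ => Stmt8Aux.rpow_lip hs0 hs1 hδ0 _ _
      _ = s * δ ^ (s - 1) *
            ∑ i, |(resS M z (fun i => v i) i i).im - (resS M z (fun i => w i) i i).im| := by
          rw [Finset.mul_sum]
  have hsqrtN : Real.sqrt N * Real.sqrt N = (N : ℝ) := Real.mul_self_sqrt (Nat.cast_nonneg N)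
  have hsqrtNpos : 0 < Real.sqrt N := Real.sqrt_pos.2 hNpos
  calc |(1 / (N : ℝ)) * ∑ i, max (resS M z (fun i => v i) i i).im δ ^ s -
        (1 / (N : ℝ)) * ∑ i, max (resS M z (fun i => w i) i i).im δ ^ s|
      = (1 / (N : ℝ)) * |∑ i, (max (resS M z (fun i => v i) i i).im δ ^ s
          - max (resS M z (fun i => w i) i i).im δ ^ s)| := by
        rw [← mul_sub, abs_mul, abs_of_nonneg (show (0 : ℝ) ≤ 1 / N by positivity),
          Finset.sum_sub_distrib]
    _ ≤ (1 / (N : ℝ)) * (s * δ ^ (s - 1) *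
          ∑ i, |(resS M z (fun i => v i) i i).im - (resS M z (fun i => w i) i i).im|) :=
        mul_le_mul_of_nonneg_left h2 (by positivity)
    _ ≤ (1 / (N : ℝ)) * (s * δ ^ (s - 1) * ((1 / η ^ 2) * (Real.sqrt N * ‖v - w‖))) :=
        mul_le_mul_of_nonneg_left (mul_le_mul_of_nonneg_left h3 hC) (by positivity)
    _ = s * δ ^ (s - 1) / (η ^ 2 * Real.sqrt N) * ‖v - w‖ := by
        have hη2 : (η : ℝ) ^ 2 ≠ 0 := by positivity
        field_simp
        ring_nf
        rw [Real.sq_sqrt (by positivity : (0 : ℝ) ≤ (N : ℝ))]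
        ring
end
end

section
/- Fix an integer N ≥ 1, t > 0, z = E + iη with η > 0, and v ∈ ℝ^N. Let M and M' be N×N real symmetric matrices such that Δ = M' − M has rank at most 4 and ℓ²→ℓ² operator norm at most 8t. Set S = (M + diag(v) − z·Id)^{−1} and S' = (M' + diag(v) − z·Id)^{−1}. Then: (i) (1/N)·∑_{i=1}^N |S'_{ii} − S_{ii}| ≤ 32t/(N·η²); (ii) for every real s ≥ 1, |(1/N)·∑_i (Im S'_{ii})^s − (1/N)·∑_i (Im S_{ii})^s| ≤ 32·s·t/(N·η^{s+1}); (iii) for every s ∈ (0,1) and δ ∈ (0, η^{−1}], |(1/N)·∑_i (max(Im S'_{ii},δ))^s − (1/N)·∑_i (max(Im S_{ii},δ))^s| ≤ 32·s·t·δ^{s−1}/(N·η²). -/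
open Matrix
open scoped Real ComplexConjugate

noncomputable section

/-- MVT-type bound. -/
lemma mvt_rpow {p K : ℝ} (hp : 0 < p) {a b : ℝ} (ha : 0 ≤ a) (hab : a ≤ b)
    (h0 : 0 < a ∨ 1 ≤ p) (hK : ∀ x, a < x → x < b → p * x ^ (p - 1) ≤ K) :
    b ^ p - a ^ p ≤ K * (b - a) := by
  rcases eq_or_lt_of_le hab with rfl | hlt
  · simp
  have hcont : Continuous fun x : ℝ => x ^ p := Real.continuous_rpow_const hp.le
  have hder : ∀ x ∈ Set.Ioo a b, HasDerivAt (fun x : ℝ => x ^ p) (p * x ^ (p - 1)) x := by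
    intro x hx
    refine Real.hasDerivAt_rpow_const ?_
    rcases h0 with h0 | h0
    · exact Or.inl (ne_of_gt (lt_trans h0 hx.1))
    · exact Or.inr h0
  obtain ⟨c, hc, hceq⟩ := exists_hasDerivAt_eq_slope (fun x : ℝ => x ^ p)
    (fun x => p * x ^ (p - 1)) hlt hcont.continuousOn hder
  have hbma : 0 < b - a := sub_pos.mpr hlt
  have : b ^ p - a ^ p = (p * c ^ (p - 1)) * (b - a) := by
    rw [hceq]; field_simp
  rw [this]
  exact mul_le_mul_of_nonneg_right (hK c hc.1 hc.2) hbma.le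

lemma abs_rpow_sub_rpow {p K : ℝ} (hp : 0 < p) {a b : ℝ} (ha : 0 ≤ a) (hb : 0 ≤ b)
    (h0 : 0 < min a b ∨ 1 ≤ p)
    (hK : ∀ x, min a b < x → x < max a b → p * x ^ (p - 1) ≤ K) :
    |a ^ p - b ^ p| ≤ K * |a - b| := by
  rcases le_total a b with h | h
  · rw [min_eq_left h] at h0 hK
    rw [max_eq_right h] at hK
    rw [abs_sub_comm, abs_of_nonneg (sub_nonneg.mpr (Real.rpow_le_rpow ha h hp.le)),
      abs_sub_comm, abs_of_nonneg (sub_nonneg.mpr h)]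
    exact mvt_rpow hp ha h h0 hK
  · rw [min_eq_right h] at h0 hK
    rw [max_eq_left h] at hK
    rw [abs_of_nonneg (sub_nonneg.mpr (Real.rpow_le_rpow hb h hp.le)),
      abs_of_nonneg (sub_nonneg.mpr h)]
    exact mvt_rpow hp hb h h0 hK


lemma rank_decomp {N : ℕ} (Δ : Matrix (Fin N) (Fin N) ℝ) (hΔ : Δ.IsSymm) :
    ∃ u : Fin Δ.rank → Fin N → ℝ, (∀ k, ∑ i, (u k i) ^ 2 = 1) ∧
      ∀ i j, Δ i j = ∑ k, u k i * Δ.mulVec (u k) j := by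
  classical
  set V := EuclideanSpace ℝ (Fin N) with hV
  set L : V →ₗ[ℝ] V := Matrix.toEuclideanLin Δ with hL
  set W : Submodule ℝ V := LinearMap.range L with hW
  have hfr : Module.finrank ℝ W = Δ.rank := by
    rw [Matrix.rank_eq_finrank_range_toLin Δ (EuclideanSpace.basisFun (Fin N) ℝ).toBasis
      (EuclideanSpace.basisFun (Fin N) ℝ).toBasis, ← Matrix.toEuclideanLin_eq_toLin_orthonormal]
  set b : OrthonormalBasis (Fin Δ.rank) ℝ W :=
    (stdOrthonormalBasis ℝ W).reindex (finCongr hfr) with hb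
  set eL : V ≃ₗ[ℝ] (Fin N → ℝ) := WithLp.linearEquiv 2 ℝ (Fin N → ℝ) with heL
  set u : Fin Δ.rank → Fin N → ℝ := fun k => eL ((b k : V)) with hu
  have hLmul : ∀ x : Fin N → ℝ, eL (L (eL.symm x)) = Δ.mulVec x := fun x => rfl
  have hinner : ∀ (y : V) (k : Fin Δ.rank),
      (inner ℝ ((b k : V)) y : ℝ) = ∑ i, u k i * eL y i := by
    intro y k
    rw [PiLp.inner_apply]
    exact Finset.sum_congr rfl fun i _ => by
      rw [RCLike.inner_apply', starRingEnd_apply, star_trivial]; rfl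
  have expand : ∀ y : W, (y : V) = ∑ k, (inner ℝ ((b k : V)) ((y : V)) : ℝ) • (b k : V) := by
    intro y
    conv_lhs => rw [← b.sum_repr' y]
    rw [Submodule.coe_sum]
    refine Finset.sum_congr rfl fun k _ => ?_
    rw [Submodule.coe_smul, Submodule.coe_inner]
  have hnorm : ∀ k, ∑ i, u k i ^ 2 = 1 := by
    intro k
    have h1 : (inner ℝ ((b k : V)) ((b k : V)) : ℝ) = 1 := by
      rw [← Submodule.coe_inner]
      simpa using orthonormal_iff_ite.mp b.orthonormal k k
    rw [hinner] at h1
    rw [← h1]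
    exact Finset.sum_congr rfl fun i _ => (sq (u k i))
  refine ⟨u, hnorm, ?_⟩
  intro i j
  have hmem : L (eL.symm (Pi.single j 1)) ∈ W := LinearMap.mem_range_self L _
  have hexp := expand ⟨L (eL.symm (Pi.single j 1)), hmem⟩
  have happ := congrArg (fun v => eL v i) hexp
  simp only [map_sum, _root_.map_smul] at happ
  have hcol : eL (L (eL.symm (Pi.single j 1))) = Δ.mulVec (Pi.single j 1) := hLmul _
  have hcoli : Δ i j = eL (L (eL.symm (Pi.single j 1))) i := by
    rw [hcol]; simp
  rw [hcoli, happ]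
  rw [Finset.sum_apply]
  refine Finset.sum_congr rfl fun k _ => ?_
  rw [Pi.smul_apply, smul_eq_mul, hinner _ k, hcol]
  -- now: (∑ l, u k l * Δ.mulVec (Pi.single j 1) l) * u k i = u k i * Δ.mulVec (u k) j
  have h1 : ∀ l, Δ.mulVec (Pi.single j 1) l = Δ l j := by
    intro l; rw [Matrix.mulVec_single]; simp
  have hsymmsum : ∑ l, u k l * Δ.mulVec (Pi.single j 1) l = Δ.mulVec (u k) j := by
    simp only [h1]
    rw [show Δ.mulVec (u k) j = ∑ l, Δ j l * u k l from rfl]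
    refine Finset.sum_congr rfl fun l _ => ?_
    rw [hΔ.apply l j]; ring
  rw [hsymmsum, mul_comm]


/-- imaginary part of the quadratic form of the shifted symmetric matrix -/
lemma quad_im_s9 {N : ℕ} (B : Matrix (Fin N) (Fin N) ℝ) (hB : B.IsSymm) (z : ℂ)
    (x : Fin N → ℂ) :
    (∑ i, (starRingEnd ℂ) (x i) *
      ((B.map (fun r => (r : ℂ)) - z • 1).mulVec x i)).im
      = - z.im * ∑ i, Complex.normSq (x i) := by
  classical
  have hsplit : ∀ i, ((B.map (fun r => (r : ℂ)) - z • 1).mulVec x) i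
      = (B.map (fun r => (r : ℂ))).mulVec x i - z * x i := by
    intro i
    rw [Matrix.sub_mulVec, Pi.sub_apply, Matrix.smul_mulVec, Matrix.one_mulVec,
      Pi.smul_apply, smul_eq_mul]
  simp only [hsplit, mul_sub]
  rw [Finset.sum_sub_distrib]
  set P := ∑ i, (starRingEnd ℂ) (x i) * (B.map (fun r => (r : ℂ))).mulVec x i with hP
  have hPr : P = ∑ i, ∑ j, (starRingEnd ℂ) (x i) * ((B i j : ℂ) * x j) := by
    rw [hP]
    refine Finset.sum_congr rfl fun i _ => ?_
    rw [Matrix.mulVec, dotProduct, Finset.mul_sum]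
    rfl
  have hPconj : (starRingEnd ℂ) P = P := by
    rw [hPr]
    simp only [map_sum]
    rw [Finset.sum_comm]
    refine Finset.sum_congr rfl fun i _ => Finset.sum_congr rfl fun j _ => ?_
    rw [_root_.map_mul, _root_.map_mul, Complex.conj_conj, Complex.conj_ofReal, hB.apply i j]
    ring
  have hPim : P.im = 0 := by
    have := congrArg Complex.im hPconj
    rw [Complex.conj_im] at this
    linarith
  have hz : ∑ i, (starRingEnd ℂ) (x i) * (z * x i)
      = z * ((∑ i, Complex.normSq (x i) : ℝ) : ℂ) := by
    push_cast
    rw [Finset.mul_sum]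
    refine Finset.sum_congr rfl fun i _ => ?_
    rw [← Complex.mul_conj]
    ring
  rw [hz, Complex.sub_im, hPim, Complex.mul_im]
  simp only [Complex.ofReal_re, Complex.ofReal_im, mul_zero, add_zero, zero_sub]
  ring

/-- lower bound for the shifted quadratic form -/
lemma resolvent_lb {N : ℕ} (B : Matrix (Fin N) (Fin N) ℝ) (hB : B.IsSymm) {z : ℂ}
    (hz : 0 < z.im) (x : Fin N → ℂ) :
    z.im ^ 2 * ∑ i, Complex.normSq (x i)
      ≤ ∑ i, Complex.normSq ((B.map (fun r => (r : ℂ)) - z • 1).mulVec x i) := by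
  classical
  set A := B.map (fun r => (r : ℂ)) - z • 1 with hA
  set y := A.mulVec x with hy
  set X := ∑ i, Complex.normSq (x i) with hX
  set Y := ∑ i, Complex.normSq (y i) with hY
  have hX0 : 0 ≤ X := Finset.sum_nonneg fun i _ => Complex.normSq_nonneg _
  have hY0 : 0 ≤ Y := Finset.sum_nonneg fun i _ => Complex.normSq_nonneg _
  set P := ∑ i, (starRingEnd ℂ) (x i) * y i with hP
  have him : P.im = - z.im * X := quad_im_s9 B hB z x
  have h1 : z.im * X ≤ ‖P‖ := by
    have := Complex.abs_im_le_norm P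
    rw [him, abs_mul, abs_neg, abs_of_pos hz, abs_of_nonneg hX0] at this
    exact this
  have h2 : ‖P‖ ≤ ∑ i, ‖x i‖ * ‖y i‖ := by
    refine le_trans (norm_sum_le _ _) (le_of_eq ?_)
    refine Finset.sum_congr rfl fun i _ => ?_
    rw [norm_mul, Complex.norm_conj]
  have h3 : (∑ i, ‖x i‖ * ‖y i‖) ^ 2 ≤ X * Y := by
    have := Finset.sum_mul_sq_le_sq_mul_sq Finset.univ
      (fun i => ‖x i‖) (fun i => ‖y i‖)
    simpa only [Complex.sq_norm] using this
  have h5 : 0 ≤ z.im * X := mul_nonneg hz.le hX0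
  have h4 : (z.im * X) ^ 2 ≤ X * Y :=
    le_trans (pow_le_pow_left₀ h5 (le_trans h1 h2) 2) h3
  rcases eq_or_lt_of_le hX0 with hX0' | hX0'
  · rw [← hX0']; simpa using hY0
  · nlinarith

lemma resolvent_isUnit {N : ℕ} (B : Matrix (Fin N) (Fin N) ℝ) (hB : B.IsSymm) {z : ℂ}
    (hz : 0 < z.im) : IsUnit (B.map (fun r => (r : ℂ)) - z • 1).det := by
  classical
  rw [isUnit_iff_ne_zero]
  intro hdet
  obtain ⟨w, hw0, hw⟩ := (Matrix.exists_mulVec_eq_zero_iff).mpr hdet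
  have hlb := resolvent_lb B hB hz w
  rw [hw] at hlb
  simp only [Pi.zero_apply, Complex.normSq_zero, Finset.sum_const_zero] at hlb
  have hX : ∑ i, Complex.normSq (w i) = 0 := by
    have hX0 : 0 ≤ ∑ i, Complex.normSq (w i) :=
      Finset.sum_nonneg fun i _ => Complex.normSq_nonneg _
    nlinarith [pow_pos hz 2]
  apply hw0
  funext i
  have := (Finset.sum_eq_zero_iff_of_nonneg
    (fun i _ => Complex.normSq_nonneg (w i))).mp hX i (Finset.mem_univ i)
  exact Complex.normSq_eq_zero.mp this

/-- norm bound for the resolvent applied to a vector -/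
lemma resolvent_apply_bound {N : ℕ} (B : Matrix (Fin N) (Fin N) ℝ) (hB : B.IsSymm) {z : ℂ}
    (hz : 0 < z.im) (w : Fin N → ℂ) :
    z.im ^ 2 * ∑ i, Complex.normSq ((B.map (fun r => (r : ℂ)) - z • 1)⁻¹.mulVec w i)
      ≤ ∑ i, Complex.normSq (w i) := by
  classical
  set A := B.map (fun r => (r : ℂ)) - z • 1 with hA
  have h1 : A.mulVec (A⁻¹.mulVec w) = w := by
    rw [Matrix.mulVec_mulVec, Matrix.mul_nonsing_inv _ (resolvent_isUnit B hB hz),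
      Matrix.one_mulVec]
  have := resolvent_lb B hB hz (A⁻¹.mulVec w)
  rw [← hA, h1] at this
  exact this

/-- diagonal entries of the resolvent -/
lemma resolvent_diag {N : ℕ} (B : Matrix (Fin N) (Fin N) ℝ) (hB : B.IsSymm) {z : ℂ}
    (hz : 0 < z.im) (i : Fin N) :
    0 ≤ ((B.map (fun r => (r : ℂ)) - z • 1)⁻¹ i i).im ∧
      ((B.map (fun r => (r : ℂ)) - z • 1)⁻¹ i i).im ≤ (z.im)⁻¹ := by
  classical
  set A := B.map (fun r => (r : ℂ)) - z • 1 with hA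
  set S := A⁻¹ with hS
  set y := S.mulVec (Pi.single i 1) with hy
  have hAy : A.mulVec y = Pi.single i 1 := by
    rw [hy, Matrix.mulVec_mulVec, Matrix.mul_nonsing_inv _ (resolvent_isUnit B hB hz),
      Matrix.one_mulVec]
  have hyi : y i = S i i := by rw [hy]; simp
  have hP : ∑ j, (starRingEnd ℂ) (y j) * (A.mulVec y) j = (starRingEnd ℂ) (y i) := by
    rw [hAy]
    rw [Finset.sum_eq_single i]
    · simp
    · intro j _ hji; simp [Pi.single_apply, hji]
    · intro h; exact absurd (Finset.mem_univ i) h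
  have him := quad_im_s9 B hB z y
  rw [← hA, hP] at him
  rw [Complex.conj_im] at him
  have hyim : (S i i).im = z.im * ∑ j, Complex.normSq (y j) := by
    rw [← hyi]
    nlinarith [him]
  have hsum0 : 0 ≤ ∑ j, Complex.normSq (y j) :=
    Finset.sum_nonneg fun j _ => Complex.normSq_nonneg _
  constructor
  · rw [hyim]
    positivity
  · have hbd := resolvent_apply_bound B hB hz (Pi.single i 1)
    have hsingle : ∑ j, Complex.normSq ((Pi.single i 1 : Fin N → ℂ) j) = 1 := by
      rw [Finset.sum_eq_single i]
      · simp
      · intro j _ hji; simp [Pi.single_apply, hji]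
      · intro h; exact absurd (Finset.mem_univ i) h
    rw [hsingle] at hbd
    rw [hyim]
    rw [← hA, ← hS, ← hy] at hbd
    have hz2 : (0:ℝ) < z.im ^ 2 := by positivity
    calc z.im * ∑ j, Complex.normSq (y j) ≤ z.im * (1 / z.im ^ 2) := by
          apply mul_le_mul_of_nonneg_left _ hz.le
          rw [le_div_iff₀ hz2]
          linarith [hbd]
      _ = (z.im)⁻¹ := by field_simp

theorem stmt9 (N : ℕ) (hN : 1 ≤ N) (t : ℝ) (ht : 0 < t) (E η : ℝ) (hη : 0 < η)
    (v : Fin N → ℝ) (M M' : Matrix (Fin N) (Fin N) ℝ) (hM : M.IsSymm) (hM' : M'.IsSymm)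
    (hrank : (M' - M).rank ≤ 4)
    (hnorm : ∀ x : Fin N → ℝ,
      Real.sqrt (∑ i, ((M' - M).mulVec x i) ^ 2) ≤ 8 * t * Real.sqrt (∑ i, x i ^ 2)) :
    ((1 / (N : ℝ)) * ∑ i, ‖
        (resS M' (E + η * Complex.I) v i i - resS M (E + η * Complex.I) v i i)‖ ≤
      32 * t / (N * η ^ 2)) ∧
    (∀ s : ℝ, 1 ≤ s →
      |(1 / (N : ℝ)) * ∑ i, (resS M' (E + η * Complex.I) v i i).im ^ s -
          (1 / (N : ℝ)) * ∑ i, (resS M (E + η * Complex.I) v i i).im ^ s| ≤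
        32 * s * t / (N * η ^ (s + 1))) ∧
    (∀ s : ℝ, s ∈ Set.Ioo (0 : ℝ) 1 → ∀ δ : ℝ, δ ∈ Set.Ioc (0 : ℝ) η⁻¹ →
      |(1 / (N : ℝ)) * ∑ i, max (resS M' (E + η * Complex.I) v i i).im δ ^ s -
          (1 / (N : ℝ)) * ∑ i, max (resS M (E + η * Complex.I) v i i).im δ ^ s| ≤
        32 * s * t * δ ^ (s - 1) / (N * η ^ 2)) := by
  classical
  have hNR : (0 : ℝ) < N := by exact_mod_cast hN
  set z : ℂ := (E : ℂ) + (η : ℂ) * Complex.I with hz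
  have hzim : 0 < z.im := by simp [hz, hη]
  have hzim' : z.im = η := by simp [hz]
  set Bm : Matrix (Fin N) (Fin N) ℝ := M + Matrix.diagonal v with hBm
  set Bm' : Matrix (Fin N) (Fin N) ℝ := M' + Matrix.diagonal v with hBm'
  have hBsym : Bm.IsSymm := hM.add (Matrix.isSymm_diagonal v)
  have hBsym' : Bm'.IsSymm := hM'.add (Matrix.isSymm_diagonal v)
  set A : Matrix (Fin N) (Fin N) ℂ := Bm.map (fun r => (r : ℂ)) - z • 1 with hA
  set A' : Matrix (Fin N) (Fin N) ℂ := Bm'.map (fun r => (r : ℂ)) - z • 1 with hA'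
  set S : Matrix (Fin N) (Fin N) ℂ := A⁻¹ with hS
  set S' : Matrix (Fin N) (Fin N) ℂ := A'⁻¹ with hS'
  have hresS : resS M ((E : ℂ) + (η : ℂ) * Complex.I) v = S := rfl
  have hresS' : resS M' ((E : ℂ) + (η : ℂ) * Complex.I) v = S' := rfl
  have hdet : IsUnit A.det := resolvent_isUnit Bm hBsym hzim
  have hdet' : IsUnit A'.det := resolvent_isUnit Bm' hBsym' hzim
  have hAS : A * S = 1 := Matrix.mul_nonsing_inv _ hdet
  have hS'A' : S' * A' = 1 := Matrix.nonsing_inv_mul _ hdet'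
  have hAsymm : Aᵀ = A := by
    rw [hA, Matrix.transpose_sub, Matrix.transpose_smul, Matrix.transpose_one,
      ← Matrix.transpose_map, hBsym]
  have hSsymm : Sᵀ = S := by
    rw [hS, Matrix.transpose_nonsing_inv, hAsymm]
  set Δ : Matrix (Fin N) (Fin N) ℝ := M' - M with hΔ
  have hΔsym : Δ.IsSymm := hM'.sub hM
  have hAdiff : A' - A = Δ.map (fun r => (r : ℂ)) := by
    ext i j
    simp only [hA, hA', hBm, hBm', hΔ, Matrix.sub_apply, Matrix.add_apply, Matrix.map_apply]
    push_cast
    ring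
  have hSS : S' - S = -(S' * Δ.map (fun r => (r : ℂ)) * S) := by
    have h1 : S' * A * S = S' := by rw [Matrix.mul_assoc, hAS, Matrix.mul_one]
    have h2 : S' * A' * S = S := by rw [hS'A', Matrix.one_mul]
    calc S' - S = S' * A * S - S' * A' * S := by rw [h1, h2]
      _ = -(S' * (A' - A) * S) := by
          noncomm_ring
      _ = -(S' * Δ.map (fun r => (r : ℂ)) * S) := by rw [hAdiff]
  obtain ⟨u, hu1, hu2⟩ := rank_decomp Δ hΔsym
  -- the diagonal identity
  have hSsym_e : ∀ a b, S a b = S b a := fun a b => by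
    conv_lhs => rw [← hSsymm, Matrix.transpose_apply]
  have hXc : ∀ j l, (Δ.map (fun r => (r : ℂ))) j l
      = ∑ k, (u k j : ℂ) * (((Δ.mulVec (u k)) l : ℝ) : ℂ) := by
    intro j l
    rw [Matrix.map_apply, hu2 j l]
    push_cast
    rfl
  have expand : ∀ i j, (S' * Δ.map (fun r => (r : ℂ))) i j
      = ∑ k, (S'.mulVec (fun l => (u k l : ℂ))) i * (((Δ.mulVec (u k)) j : ℝ) : ℂ) := by
    intro i j
    rw [Matrix.mul_apply]
    calc ∑ l, S' i l * (Δ.map (fun r => (r : ℂ))) l j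
        = ∑ l, ∑ k, S' i l * (u k l : ℂ) * (((Δ.mulVec (u k)) j : ℝ) : ℂ) := by
          refine Finset.sum_congr rfl fun l _ => ?_
          rw [hXc l j, Finset.mul_sum]
          exact Finset.sum_congr rfl fun k _ => by ring
      _ = ∑ k, ∑ l, S' i l * (u k l : ℂ) * (((Δ.mulVec (u k)) j : ℝ) : ℂ) := Finset.sum_comm
      _ = ∑ k, (S'.mulVec (fun l => (u k l : ℂ))) i * (((Δ.mulVec (u k)) j : ℝ) : ℂ) := by
          refine Finset.sum_congr rfl fun k _ => ?_
          rw [← Finset.sum_mul]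
          rfl
  have hdiagid : ∀ i, (S' * Δ.map (fun r => (r : ℂ)) * S) i i
      = ∑ k, (S'.mulVec (fun j => (u k j : ℂ))) i
          * (S.mulVec (fun l => ((Δ.mulVec (u k)) l : ℂ))) i := by
    intro i
    rw [Matrix.mul_apply]
    calc ∑ j, (S' * Δ.map (fun r => (r : ℂ))) i j * S j i
        = ∑ j, ∑ k, (S'.mulVec (fun l => (u k l : ℂ))) i
            * (((Δ.mulVec (u k)) j : ℝ) : ℂ) * S j i := by
          refine Finset.sum_congr rfl fun j _ => ?_
          rw [expand i j, Finset.sum_mul]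
      _ = ∑ k, ∑ j, (S'.mulVec (fun l => (u k l : ℂ))) i
            * (((Δ.mulVec (u k)) j : ℝ) : ℂ) * S j i := Finset.sum_comm
      _ = ∑ k, (S'.mulVec (fun j => (u k j : ℂ))) i
            * (S.mulVec (fun l => ((Δ.mulVec (u k)) l : ℂ))) i := by
          refine Finset.sum_congr rfl fun k _ => ?_
          rw [show (S.mulVec (fun l => (((Δ.mulVec (u k)) l : ℝ) : ℂ))) i
              = ∑ j, S i j * (((Δ.mulVec (u k)) j : ℝ) : ℂ) from rfl, Finset.mul_sum]
          refine Finset.sum_congr rfl fun j _ => ?_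
          rw [hSsym_e j i]
          ring
  -- uniform bound for each k
  have hk_bound : ∀ k, ∑ i, ‖(S'.mulVec (fun j => (u k j : ℂ))) i‖
      * ‖(S.mulVec (fun l => ((Δ.mulVec (u k)) l : ℂ))) i‖ ≤ 8 * t / η ^ 2 := by
    intro k
    have hX0 : 0 ≤ ∑ i, Complex.normSq ((S'.mulVec (fun j => (u k j : ℂ))) i) :=
      Finset.sum_nonneg fun _ _ => Complex.normSq_nonneg _
    have hY0 : 0 ≤ ∑ i, Complex.normSq ((S.mulVec (fun l => ((Δ.mulVec (u k)) l : ℂ))) i) :=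
      Finset.sum_nonneg fun _ _ => Complex.normSq_nonneg _
    have hCS : (∑ i, ‖(S'.mulVec (fun j => (u k j : ℂ))) i‖
        * ‖(S.mulVec (fun l => ((Δ.mulVec (u k)) l : ℂ))) i‖) ^ 2
        ≤ (∑ i, Complex.normSq ((S'.mulVec (fun j => (u k j : ℂ))) i))
          * ∑ i, Complex.normSq ((S.mulVec (fun l => ((Δ.mulVec (u k)) l : ℂ))) i) := by
      have := Finset.sum_mul_sq_le_sq_mul_sq Finset.univ
        (fun i => ‖(S'.mulVec (fun j => (u k j : ℂ))) i‖)
        (fun i => ‖(S.mulVec (fun l => ((Δ.mulVec (u k)) l : ℂ))) i‖)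
      simpa only [Complex.sq_norm] using this
    have hpb : ∑ i, Complex.normSq ((S'.mulVec (fun j => (u k j : ℂ))) i) ≤ 1 / η ^ 2 := by
      have hp := resolvent_apply_bound Bm' hBsym' hzim (fun j => (u k j : ℂ))
      rw [← hA', ← hS', hzim'] at hp
      have husq : ∑ i, Complex.normSq ((fun j => (u k j : ℂ)) i) = 1 := by
        rw [← hu1 k]
        exact Finset.sum_congr rfl fun i _ => by
          simp only [Complex.normSq_ofReal]; ring
      rw [husq] at hp
      rw [le_div_iff₀ (by positivity : (0:ℝ) < η ^ 2)]
      linarith [hp]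
    have hwsq : ∑ i, ((Δ.mulVec (u k)) i) ^ 2 ≤ (8 * t) ^ 2 := by
      have h1 := hnorm (u k)
      rw [hu1 k, Real.sqrt_one, mul_one] at h1
      have h2 : ∑ i, ((Δ.mulVec (u k)) i) ^ 2
          = Real.sqrt (∑ i, ((Δ.mulVec (u k)) i) ^ 2) ^ 2 :=
        (Real.sq_sqrt (Finset.sum_nonneg fun _ _ => sq_nonneg _)).symm
      rw [h2]
      exact pow_le_pow_left₀ (Real.sqrt_nonneg _) h1 2
    have hqb : ∑ i, Complex.normSq ((S.mulVec (fun l => ((Δ.mulVec (u k)) l : ℂ))) i)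
        ≤ (8 * t) ^ 2 / η ^ 2 := by
      have hq := resolvent_apply_bound Bm hBsym hzim (fun l => ((Δ.mulVec (u k)) l : ℂ))
      rw [← hA, ← hS, hzim'] at hq
      have hwc : ∑ i, Complex.normSq ((fun l => ((Δ.mulVec (u k)) l : ℂ)) i)
          = ∑ i, ((Δ.mulVec (u k)) i) ^ 2 :=
        Finset.sum_congr rfl fun i _ => by
          simp only [Complex.normSq_ofReal]; ring
      rw [hwc] at hq
      rw [le_div_iff₀ (by positivity : (0:ℝ) < η ^ 2)]
      linarith [hq, hwsq]
    have hfin : (∑ i, ‖(S'.mulVec (fun j => (u k j : ℂ))) i‖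
        * ‖(S.mulVec (fun l => ((Δ.mulVec (u k)) l : ℂ))) i‖) ^ 2
        ≤ (8 * t / η ^ 2) ^ 2 := by
      refine le_trans hCS (le_trans (mul_le_mul hpb hqb hY0 (by positivity)) (le_of_eq ?_))
      field_simp
    have habs0 : 0 ≤ ∑ i, ‖(S'.mulVec (fun j => (u k j : ℂ))) i‖
        * ‖(S.mulVec (fun l => ((Δ.mulVec (u k)) l : ℂ))) i‖ :=
      Finset.sum_nonneg fun i _ =>
        mul_nonneg (norm_nonneg _) (norm_nonneg _)
    have hc : (0:ℝ) < 8 * t / η ^ 2 := by positivity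
    nlinarith [hfin, habs0, hc]
  -- core bound
  have hcore : ∑ i, ‖S' i i - S i i‖ ≤ 32 * t / η ^ 2 := by
    have hstep : ∑ i, ‖S' i i - S i i‖
        ≤ ∑ k, ∑ i, ‖(S'.mulVec (fun j => (u k j : ℂ))) i‖
            * ‖(S.mulVec (fun l => ((Δ.mulVec (u k)) l : ℂ))) i‖ := by
      rw [Finset.sum_comm]
      refine Finset.sum_le_sum fun i _ => ?_
      have h1 : S' i i - S i i = (S' - S) i i := rfl
      rw [h1, hSS, Matrix.neg_apply, norm_neg, hdiagid i]
      refine le_trans (norm_sum_le _ _) (Finset.sum_le_sum fun k _ => ?_)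
      rw [norm_mul]
    refine le_trans hstep ?_
    have hbd : ∑ k : Fin Δ.rank, (8 * t / η ^ 2 : ℝ)
        = (Δ.rank : ℝ) * (8 * t / η ^ 2) := by
      rw [Finset.sum_const, Finset.card_univ, Fintype.card_fin, nsmul_eq_mul]
    refine le_trans (Finset.sum_le_sum fun k _ => hk_bound k) ?_
    rw [hbd]
    have hr4 : (Δ.rank : ℝ) ≤ 4 := by exact_mod_cast hrank
    have : (Δ.rank : ℝ) * (8 * t / η ^ 2) ≤ 4 * (8 * t / η ^ 2) :=
      mul_le_mul_of_nonneg_right hr4 (by positivity)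
    refine le_trans this (le_of_eq ?_)
    field_simp
    ring
  -- diagonal bounds
  have hdiagS : ∀ i, 0 ≤ (S i i).im ∧ (S i i).im ≤ η⁻¹ := by
    intro i; have := resolvent_diag Bm hBsym hzim i; rwa [hzim'] at this
  have hdiagS' : ∀ i, 0 ≤ (S' i i).im ∧ (S' i i).im ≤ η⁻¹ := by
    intro i; have := resolvent_diag Bm' hBsym' hzim i; rwa [hzim'] at this
  have hpart1 : (1 / (N : ℝ)) * ∑ i, ‖S' i i - S i i‖ ≤ 32 * t / (N * η ^ 2) := by
    have h : 32 * t / ((N : ℝ) * η ^ 2) = (1 / (N : ℝ)) * (32 * t / η ^ 2) := by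
      field_simp
    rw [h]
    exact mul_le_mul_of_nonneg_left hcore (by positivity)
  refine ⟨by rw [hresS, hresS']; exact hpart1, ?_, ?_⟩
  · -- part (ii)
    intro s hs
    have hs0 : (0:ℝ) < s := lt_of_lt_of_le one_pos hs
    have hKpos : 0 < s * η⁻¹ ^ (s - 1) :=
      mul_pos hs0 (Real.rpow_pos_of_pos (by positivity) _)
    have hpt : ∀ i, |(S' i i).im ^ s - (S i i).im ^ s|
        ≤ (s * η⁻¹ ^ (s - 1)) * ‖S' i i - S i i‖ := by
      intro i
      have h1 : |(S' i i).im ^ s - (S i i).im ^ s|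
          ≤ (s * η⁻¹ ^ (s - 1)) * |(S' i i).im - (S i i).im| := by
        refine abs_rpow_sub_rpow hs0 (hdiagS' i).1 (hdiagS i).1 (Or.inr hs) ?_
        intro x hx1 hx2
        have hx0 : 0 ≤ x := le_trans (le_min (hdiagS' i).1 (hdiagS i).1) hx1.le
        have hxup : x ≤ η⁻¹ := le_trans hx2.le (max_le (hdiagS' i).2 (hdiagS i).2)
        exact mul_le_mul_of_nonneg_left
          (Real.rpow_le_rpow hx0 hxup (by linarith)) hs0.le
      refine le_trans h1 (mul_le_mul_of_nonneg_left ?_ hKpos.le)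
      rw [← Complex.sub_im]
      exact Complex.abs_im_le_norm _
    rw [hresS, hresS']
    rw [← mul_sub, ← Finset.sum_sub_distrib, abs_mul,
      abs_of_nonneg (by positivity : (0:ℝ) ≤ 1 / (N:ℝ))]
    have hchain : |∑ i, ((S' i i).im ^ s - (S i i).im ^ s)|
        ≤ (s * η⁻¹ ^ (s - 1)) * (32 * t / η ^ 2) := by
      refine le_trans (Finset.abs_sum_le_sum_abs _ _) ?_
      refine le_trans (Finset.sum_le_sum fun i _ => hpt i) ?_
      rw [← Finset.mul_sum]
      exact mul_le_mul_of_nonneg_left hcore hKpos.le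
    refine le_trans (mul_le_mul_of_nonneg_left hchain (by positivity)) (le_of_eq ?_)
    have hη1 : η⁻¹ ^ (s - 1) = (η ^ (s - 1))⁻¹ := Real.inv_rpow hη.le _
    have hexp : η ^ (s + 1) = η ^ (s - 1) * η ^ (2:ℕ) := by
      rw [show s + 1 = (s - 1) + ((2:ℕ):ℝ) by push_cast; ring]
      rw [Real.rpow_add hη, Real.rpow_natCast]
    rw [hη1, hexp]
    have h1 : (0:ℝ) < η ^ (s - 1) := Real.rpow_pos_of_pos hη _
    field_simp
  · -- part (iii)
    intro s hsIoo δ hδ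
    obtain ⟨hs0, hs1⟩ := hsIoo
    obtain ⟨hδ0, hδη⟩ := hδ
    have hδs : 0 < δ ^ (s - 1) := Real.rpow_pos_of_pos hδ0 _
    have hKpos : 0 < s * δ ^ (s - 1) := mul_pos hs0 hδs
    have hpt : ∀ i, |max (S' i i).im δ ^ s - max (S i i).im δ ^ s|
        ≤ (s * δ ^ (s - 1)) * ‖S' i i - S i i‖ := by
      intro i
      have hm1 : δ ≤ max (S' i i).im δ := le_max_right _ _
      have hm2 : δ ≤ max (S i i).im δ := le_max_right _ _
      have h1 : |max (S' i i).im δ ^ s - max (S i i).im δ ^ s|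
          ≤ (s * δ ^ (s - 1)) * |max (S' i i).im δ - max (S i i).im δ| := by
        refine abs_rpow_sub_rpow hs0 (le_trans hδ0.le hm1) (le_trans hδ0.le hm2)
          (Or.inl (lt_min (lt_of_lt_of_le hδ0 hm1) (lt_of_lt_of_le hδ0 hm2))) ?_
        intro x hx1 hx2
        have hδx : δ ≤ x := le_trans (le_min hm1 hm2) hx1.le
        exact mul_le_mul_of_nonneg_left
          (Real.rpow_le_rpow_of_nonpos hδ0 hδx (by linarith)) hs0.le
      refine le_trans h1 (mul_le_mul_of_nonneg_left ?_ hKpos.le)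
      refine le_trans (abs_max_sub_max_le_abs _ _ _) ?_
      rw [← Complex.sub_im]
      exact Complex.abs_im_le_norm _
    rw [hresS, hresS']
    rw [← mul_sub, ← Finset.sum_sub_distrib, abs_mul,
      abs_of_nonneg (by positivity : (0:ℝ) ≤ 1 / (N:ℝ))]
    have hchain : |∑ i, (max (S' i i).im δ ^ s - max (S i i).im δ ^ s)|
        ≤ (s * δ ^ (s - 1)) * (32 * t / η ^ 2) := by
      refine le_trans (Finset.abs_sum_le_sum_abs _ _) ?_
      refine le_trans (Finset.sum_le_sum fun i _ => hpt i) ?_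
      rw [← Finset.mul_sum]
      exact mul_le_mul_of_nonneg_left hcore hKpos.le
    refine le_trans (mul_le_mul_of_nonneg_left hchain (by positivity)) (le_of_eq ?_)
    field_simp
end
end

section
/- Fix integers d ≥ 3 and r ≥ 1. There exists a constant C(d) > 0 such that for every admissible N with N ≥ C the following holds: if 𝒢_N is a uniformly random simple d-regular graph on the vertex set {1,…,N}, then the probability that the ball of radius r around vertex 1 contains a cycle (i.e., the subgraph of 𝒢_N induced on the set of vertices at graph distance at most r from vertex 1 is not acyclic) is at most C·(d−1)^{2r}/N. -/
open MeasureTheory ProbabilityTheory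
open scoped Classical ENNReal

noncomputable section

instance (N : ℕ) : MeasurableSpace (SimpleGraph (Fin N)) := ⊤

/-- The ball of radius `r` around the vertex `o` in the graph `G`: all vertices
reachable from `o` by a walk of length at most `r`. -/
def graphBall {V : Type*} (G : SimpleGraph V) (o : V) (r : ℕ) : Set V :=
  {v | ∃ p : G.Walk o v, p.length ≤ r}

namespace Stmt10Aux

open SimpleGraph

variable {V : Type*} {G : SimpleGraph V}

/-- decompose a walk of positive length as a concat -/
lemma exists_concat {a b : V} (p : G.Walk a b) (hp : p.length ≠ 0) :
    ∃ (z : V) (q : G.Walk a z) (h : G.Adj z b), p = q.concat h := by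
  cases hrev : p.reverse with
  | nil =>
    exfalso; apply hp
    have := congrArg Walk.length hrev
    simpa using this
  | cons h q =>
    refine ⟨_, q.reverse, h.symm, ?_⟩
    have := congrArg Walk.reverse hrev
    simpa [Walk.reverse_cons, Walk.concat_eq_append] using this

/-- a shortest walk to `w` that uses an edge `s(u,w)` forces `dist o u < dist o w`. -/
lemma dist_lt_of_mem_edges [DecidableEq V] {o u w : V} (p : G.Walk o w)
    (hp : p.length = G.dist o w) (he : s(u, w) ∈ p.edges) (huw : u ≠ w) :
    G.dist o u < G.dist o w := by
  have hu : u ∈ p.support := p.fst_mem_support_of_mem_edges he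
  have h1 : (p.takeUntil u hu).length + (p.dropUntil u hu).length = p.length := by
    rw [← Walk.length_append, Walk.take_spec]
  have h2 : (p.dropUntil u hu).length ≠ 0 := fun h0 => huw (Walk.eq_of_length_eq_zero h0)
  have h3 : G.dist o u ≤ (p.takeUntil u hu).length := SimpleGraph.dist_le _
  omega

/-- a path ending at `u` uses at most one edge at `u` (formulated for walks starting at `u`). -/
lemma edge_at_start_unique {u o : V} (R : G.Walk u o) (hR : R.IsPath) {w₁ w₂ : V}
    (h1 : s(u, w₁) ∈ R.edges) (h2 : s(u, w₂) ∈ R.edges) : w₁ = w₂ := by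
  cases R with
  | nil => simp at h1
  | cons h q =>
    have hnodup := (Walk.cons_isPath_iff h q).1 hR
    rcases List.mem_cons.1 h1 with h1' | h1'
    · rcases List.mem_cons.1 h2 with h2' | h2'
      · exact Sym2.congr_right.1 (h1'.trans h2'.symm)
      · exact absurd (q.fst_mem_support_of_mem_edges h2') hnodup.2
    · exact absurd (q.fst_mem_support_of_mem_edges h1') hnodup.2

lemma edge_at_end_unique {o u : V} (p : G.Walk o u) (hp : p.IsPath) {w₁ w₂ : V}
    (h1 : s(u, w₁) ∈ p.edges) (h2 : s(u, w₂) ∈ p.edges) : w₁ = w₂ := by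
  apply edge_at_start_unique p.reverse hp.reverse <;>
    · rw [Walk.edges_reverse, List.mem_reverse]; assumption

/-- a cycle has two distinct edges at its base point. -/
lemma cycle_start_two_edges {u : V} (c : G.Walk u u) (hc : c.IsCycle) :
    ∃ w₁ w₂, w₁ ≠ w₂ ∧ s(u, w₁) ∈ c.edges ∧ s(u, w₂) ∈ c.edges := by
  have hlen := hc.three_le_length
  cases c with
  | nil => simp at hlen
  | cons h q =>
    have hcyc := (Walk.cons_isCycle_iff q h).1 hc
    have hql : q.length ≠ 0 := by
      have : (Walk.cons h q).length = q.length + 1 := by simp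
      omega
    obtain ⟨z, q₃, h₃, rfl⟩ := exists_concat q hql
    rename_i b
    -- b is the first vertex after u ; z the last before returning to u
    refine ⟨b, z, ?_, ?_, ?_⟩
    · -- b ≠ z
      rintro rfl
      -- then q₃ : Walk b b is a path, so nil, so q.length = 1, contradiction with length ≥ 3
      have hq₃ : q₃.IsPath := by
        have := hcyc.1
        rw [Walk.concat_eq_append] at this
        exact this.of_append_left
      have : q₃.length = 0 := by
        by_contra h0
        obtain ⟨y, q4, h4, rfl⟩ := exists_concat q₃ h0
        have := hq₃.2
        rw [Walk.concat_eq_append, Walk.support_append] at this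
        exact (List.disjoint_of_nodup_append (by simpa using hq₃.2)) q4.start_mem_support (by simp)
      have hq3 : (q₃.concat h₃).length = q₃.length + 1 := Walk.length_concat _ _
      simp at hlen
      omega
    · simp
    · rw [Sym2.eq_swap]
      simp [Walk.edges_concat]



variable {V : Type*} {G : SimpleGraph V}

lemma mem_graphBall {o v : V} {r : ℕ} :
    v ∈ graphBall G o r ↔ G.Reachable o v ∧ G.dist o v ≤ r := by
  constructor
  · rintro ⟨p, hp⟩
    exact ⟨⟨p⟩, le_trans (SimpleGraph.dist_le p) hp⟩
  · rintro ⟨hr, hd⟩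
    obtain ⟨p, -, hp⟩ := hr.exists_path_of_dist
    exact ⟨p, by omega⟩

lemma exists_parent {o v : V} {i : ℕ} (hreach : G.Reachable o v)
    (hi : G.dist o v = i + 1) : ∃ u, G.Adj u v ∧ G.Reachable o u ∧ G.dist o u = i := by
  obtain ⟨p, -, hp⟩ := hreach.exists_path_of_dist
  have hnz : p.length ≠ 0 := by omega
  obtain ⟨z, q, h, rfl⟩ := exists_concat p hnz
  refine ⟨z, h, ⟨q⟩, le_antisymm ?_ ?_⟩
  · have := SimpleGraph.dist_le q
    have hlen : (q.concat h).length = q.length + 1 := Walk.length_concat _ _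
    omega
  · by_contra hlt
    push_neg at hlt
    obtain ⟨pz, -, hpz⟩ := SimpleGraph.Reachable.exists_path_of_dist ⟨q⟩
    have := SimpleGraph.dist_le (pz.concat h)
    have hlen : (pz.concat h).length = pz.length + 1 := Walk.length_concat _ _
    omega

variable [Fintype V]

/-- the sphere of radius `i` -/
def sph (G : SimpleGraph V) (o : V) (i : ℕ) : Finset V :=
  Finset.univ.filter (fun v => G.Reachable o v ∧ G.dist o v = i)

/-- parent choice function -/
def par (G : SimpleGraph V) (o v : V) : V :=
  if h : ∃ u, G.Adj u v ∧ G.Reachable o u ∧ G.dist o u = G.dist o v - 1 then h.choose else v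

lemma par_spec {o v : V} {i : ℕ} (hv : v ∈ sph G o (i + 1)) :
    G.Adj (par G o v) v ∧ G.Reachable o (par G o v) ∧ G.dist o (par G o v) = i := by
  simp only [sph, Finset.mem_filter] at hv
  have hex : ∃ u, G.Adj u v ∧ G.Reachable o u ∧ G.dist o u = G.dist o v - 1 := by
    obtain ⟨u, h1, h2, h3⟩ := exists_parent hv.2.1 hv.2.2
    exact ⟨u, h1, h2, by omega⟩
  rw [par, dif_pos hex]
  have := hex.choose_spec
  refine ⟨this.1, this.2.1, by omega⟩

lemma sph_zero_card (o : V) : (sph G o 0).card ≤ 1 := by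
  apply Finset.card_le_one.2
  have key : ∀ c ∈ sph G o 0, c = o := by
    intro c hc
    simp only [sph, Finset.mem_filter] at hc
    rcases SimpleGraph.dist_eq_zero_iff_eq_or_not_reachable.1 hc.2.2 with h | h
    · exact h.symm
    · exact absurd hc.2.1 h
  intro a ha b hb
  rw [key a ha, key b hb]

lemma sph_one_card {d : ℕ} (o : V) (hreg : G.IsRegularOfDegree d) :
    (sph G o 1).card ≤ d := by
  have : sph G o 1 ⊆ G.neighborFinset o := by
    intro v hv
    simp only [sph, Finset.mem_filter] at hv
    rw [SimpleGraph.mem_neighborFinset]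
    exact SimpleGraph.dist_eq_one_iff_adj.1 hv.2.2
  calc (sph G o 1).card ≤ (G.neighborFinset o).card := Finset.card_le_card this
    _ = d := hreg o

lemma sph_step_card {d : ℕ} (o : V) (hreg : G.IsRegularOfDegree d) {i : ℕ} (hi : i ≠ 0) :
    (sph G o (i + 1)).card ≤ (d - 1) * (sph G o i).card := by
  set s := sph G o (i + 1) with hs
  have himg : s.image (par G o) ⊆ sph G o i := by
    intro a ha
    obtain ⟨v, hv, rfl⟩ := Finset.mem_image.1 ha
    have := par_spec hv
    simp only [sph, Finset.mem_filter]
    exact ⟨Finset.mem_univ _, this.2.1, this.2.2⟩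
  calc s.card ≤ (d - 1) * (s.image (par G o)).card := by
        apply Finset.card_le_mul_card_image
        intro a ha
        have ha' := himg ha
        -- a ∈ sph i, i = (i-1)+1
        obtain ⟨j, rfl⟩ : ∃ j, i = j + 1 := ⟨i - 1, by omega⟩
        have hpa := par_spec ha'
        have hsub : s.filter (fun v => par G o v = a) ⊆
            (G.neighborFinset a).erase (par G o a) := by
          intro v hv
          rw [Finset.mem_filter] at hv
          have hv2 := par_spec (hs ▸ hv.1)
          rw [Finset.mem_erase, SimpleGraph.mem_neighborFinset]
          constructor
          · rintro rfl
            -- then dist o v = j, but v ∈ sph (i+1) : dist = i+1 = j+2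
            simp only [sph, Finset.mem_filter, hs] at hv
            omega
          · exact hv.2 ▸ hv2.1
        calc (s.filter (fun v => par G o v = a)).card
            ≤ ((G.neighborFinset a).erase (par G o a)).card := Finset.card_le_card hsub
          _ = (G.neighborFinset a).card - 1 := by
              rw [Finset.card_erase_of_mem]
              rw [SimpleGraph.mem_neighborFinset]
              exact hpa.1.symm
          _ = d - 1 := by rw [SimpleGraph.card_neighborFinset_eq_degree, hreg a]
    _ ≤ (d - 1) * (sph G o i).card := by
        exact Nat.mul_le_mul_left _ (Finset.card_le_card himg)

lemma sph_card {d : ℕ} (o : V) (hreg : G.IsRegularOfDegree d) {i : ℕ} (hi : 1 ≤ i) :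
    (sph G o i).card ≤ d * (d - 1) ^ (i - 1) := by
  induction i with
  | zero => omega
  | succ n ih =>
    rcases Nat.eq_zero_or_pos n with rfl | hn
    · simpa using sph_one_card o hreg
    · calc (sph G o (n + 1)).card ≤ (d - 1) * (sph G o n).card :=
            sph_step_card o hreg (by omega)
        _ ≤ (d - 1) * (d * (d - 1) ^ (n - 1)) := Nat.mul_le_mul_left _ (ih hn)
        _ = d * (d - 1) ^ n := by
            obtain ⟨m, rfl⟩ : ∃ m, n = m + 1 := ⟨n - 1, by omega⟩
            simp only [Nat.add_sub_cancel, pow_succ]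
            ring

lemma geo_sum {q : ℕ} (hq : 2 ≤ q) (r : ℕ) : ∑ j ∈ Finset.range r, q ^ j ≤ q ^ r := by
  induction r with
  | zero => simp
  | succ n ih =>
    rw [Finset.sum_range_succ, pow_succ]
    have : q ^ n * 2 ≤ q ^ n * q := Nat.mul_le_mul_left _ hq
    omega

lemma ball_card {d r : ℕ} (o : V) (hreg : G.IsRegularOfDegree d) (hd : 3 ≤ d) :
    (Finset.univ.filter (· ∈ graphBall G o r)).card ≤ 2 * d * (d - 1) ^ r := by
  have hsub : Finset.univ.filter (· ∈ graphBall G o r) ⊆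
      (Finset.range (r + 1)).biUnion (sph G o) := by
    intro v hv
    rw [Finset.mem_filter] at hv
    have := mem_graphBall.1 hv.2
    rw [Finset.mem_biUnion]
    refine ⟨G.dist o v, Finset.mem_range.2 (by omega), ?_⟩
    simp [sph, this.1]
  calc (Finset.univ.filter (· ∈ graphBall G o r)).card
      ≤ ∑ i ∈ Finset.range (r + 1), (sph G o i).card :=
        le_trans (Finset.card_le_card hsub) (Finset.card_biUnion_le)
    _ ≤ (∑ i ∈ Finset.range r, d * (d - 1) ^ i) + 1 := by
        rw [Finset.sum_range_succ']
        gcongr with i hi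
        · have := sph_card o hreg (i := i + 1) (by omega)
          simpa using this
        · exact sph_zero_card o
    _ ≤ d * (d - 1) ^ r + 1 := by
        rw [← Finset.mul_sum]
        have := geo_sum (q := d - 1) (by omega) r
        have := Nat.mul_le_mul_left d this
        omega
    _ ≤ 2 * d * (d - 1) ^ r := by
        have h1 : 1 ≤ (d - 1) ^ r := Nat.one_le_pow _ _ (by omega)
        have h2 : d * 1 ≤ d * (d - 1) ^ r := Nat.mul_le_mul_left _ h1
        nlinarith


section M3
variable {V : Type*} {G : SimpleGraph V}

lemma exists_witness [DecidableEq V] {o : V} {r : ℕ}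
    (h : ¬ (G.induce (graphBall G o r)).IsAcyclic) :
    ∃ u w : V, G.Adj u w ∧
      ∃ (P : G.Walk o u) (Q : G.Walk o w), P.length ≤ r ∧ Q.length ≤ r ∧
        s(u, w) ∉ P.edges ∧ s(u, w) ∉ Q.edges := by
  unfold SimpleGraph.IsAcyclic at h
  push_neg at h
  obtain ⟨v, c, hc⟩ := h
  set f := SimpleGraph.Embedding.induce (G := G) (graphBall G o r) with hf
  set C := c.map f.toHom with hC
  have hCcyc : C.IsCycle := by
    rw [hC, Walk.map_isCycle_iff_of_injective (f.injective)]
    exact hc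
  have hsupp : ∀ x ∈ C.support, x ∈ graphBall G o r := by
    intro x hx
    rw [hC, Walk.support_map, List.mem_map] at hx
    obtain ⟨a, -, rfl⟩ := hx
    exact a.2
  -- pick the support vertex furthest from o
  have hne : C.support.toFinset.Nonempty := by
    simp [Walk.support_ne_nil]
  obtain ⟨u, hu, hmax⟩ := Finset.exists_max_image C.support.toFinset (G.dist o) hne
  rw [List.mem_toFinset] at hu
  -- two distinct cycle edges at u
  have hrot := hCcyc.rotate hu
  obtain ⟨w₁, w₂, hww, he₁, he₂⟩ := cycle_start_two_edges (C.rotate u hu) hrot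
  have hmemC : ∀ {w'}, s(u, w') ∈ (C.rotate u hu).edges → s(u, w') ∈ C.edges := by
    intro w' hw'
    exact (C.rotate_edges u hu).mem_iff.1 hw'
  have he₁' := hmemC he₁
  have he₂' := hmemC he₂
  have hw₁s : w₁ ∈ C.support := C.snd_mem_support_of_mem_edges he₁'
  have hw₂s : w₂ ∈ C.support := C.snd_mem_support_of_mem_edges he₂'
  -- ball facts
  have hub : u ∈ graphBall G o r := hsupp u hu
  have h1b := mem_graphBall.1 hub
  obtain ⟨P, hPpath, hPlen⟩ := SimpleGraph.Reachable.exists_path_of_dist h1b.1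
  -- choose the good neighbor
  have hkey : ∃ w, (s(u, w) ∈ C.edges ∧ w ∈ C.support) ∧ s(u, w) ∉ P.edges := by
    by_cases h1 : s(u, w₁) ∈ P.edges
    · refine ⟨w₂, ⟨he₂', hw₂s⟩, fun h2 => hww ?_⟩
      exact edge_at_end_unique P hPpath h1 h2
    · exact ⟨w₁, ⟨he₁', hw₁s⟩, h1⟩
  obtain ⟨w, ⟨hwe, hws⟩, hwP⟩ := hkey
  have hadj : G.Adj u w := C.adj_of_mem_edges hwe
  have hwb : w ∈ graphBall G o r := hsupp w hws
  have h2b := mem_graphBall.1 hwb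
  obtain ⟨Q, hQpath, hQlen⟩ := SimpleGraph.Reachable.exists_path_of_dist h2b.1
  refine ⟨u, w, hadj, P, Q, by omega, by omega, hwP, ?_⟩
  intro hQe
  have hlt : G.dist o u < G.dist o w := by
    apply dist_lt_of_mem_edges Q hQlen hQe hadj.ne
  have : G.dist o w ≤ G.dist o u := hmax w (List.mem_toFinset.2 hws)
  omega

end M3

section M4
variable {V : Type*} {G : SimpleGraph V}

lemma adj_of_sym2_eq {a b c e : V} (h : s(a, b) = s(c, e)) (had : G.Adj c e) : G.Adj a b := by
  rw [← SimpleGraph.mem_edgeSet] at had ⊢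
  rwa [h]

lemma ne_of_sym2_eq {a b c e : V} (h : s(a, b) = s(c, e)) (hne : c ≠ e) : a ≠ b := by
  rcases Sym2.eq_iff.1 h with ⟨rfl, rfl⟩ | ⟨rfl, rfl⟩
  · exact hne
  · exact hne.symm

/-- The switching: remove edges `uw`, `xy`; add edges `ux`, `wy`. -/
def swG (G : SimpleGraph V) (u w x y : V) : SimpleGraph V where
  Adj a b := (G.Adj a b ∧ s(a, b) ≠ s(u, w) ∧ s(a, b) ≠ s(x, y)) ∨
      ((s(a, b) = s(u, x) ∨ s(a, b) = s(w, y)) ∧ a ≠ b)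
  symm := by
    constructor
    intro a b h
    beta_reduce at h ⊢
    rw [Sym2.eq_swap (a := b) (b := a)]
    rcases h with ⟨h1, h2, h3⟩ | ⟨h4, h5⟩
    · exact Or.inl ⟨h1.symm, h2, h3⟩
    · exact Or.inr ⟨h4, h5.symm⟩
  loopless := by
    constructor
    intro a h
    beta_reduce at h
    rcases h with ⟨h1, -, -⟩ | ⟨-, h5⟩
    · exact G.loopless.irrefl a h1
    · exact h5 rfl

variable {u w x y a b : V}

lemma swG_adj : (swG G u w x y).Adj a b ↔
    (G.Adj a b ∧ s(a, b) ≠ s(u, w) ∧ s(a, b) ≠ s(x, y)) ∨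
      ((s(a, b) = s(u, x) ∨ s(a, b) = s(w, y)) ∧ a ≠ b) := Iff.rfl

lemma swG_comm1 : swG G u w x y = swG G w u y x := by
  ext a b
  rw [swG_adj, swG_adj, Sym2.eq_swap (a := w) (b := u), Sym2.eq_swap (a := y) (b := x),
    Sym2.eq_swap (a := w) (b := y), Sym2.eq_swap (a := u) (b := x)]
  tauto

lemma swG_comm2 : swG G u w x y = swG G x y u w := by
  ext a b
  rw [swG_adj, swG_adj, Sym2.eq_swap (a := u) (b := x), Sym2.eq_swap (a := w) (b := y)]
  tauto

lemma swG_edgeSet (hux : u ≠ x) (hwy : w ≠ y) :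
    (swG G u w x y).edgeSet =
      (G.edgeSet \ {s(u, w), s(x, y)}) ∪ {s(u, x), s(w, y)} := by
  ext e
  induction e with
  | _ a b =>
    simp only [SimpleGraph.mem_edgeSet, Set.mem_union, Set.mem_diff, Set.mem_insert_iff,
      Set.mem_singleton_iff, swG_adj]
    constructor
    · rintro (⟨h1, h2, h3⟩ | ⟨h4 | h4, h5⟩)
      · exact Or.inl ⟨h1, by tauto⟩
      · exact Or.inr (Or.inl h4)
      · exact Or.inr (Or.inr h4)
    · rintro (⟨h1, h2⟩ | h | h)
      · exact Or.inl ⟨h1, by tauto, by tauto⟩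
      · exact Or.inr ⟨Or.inl h, ne_of_sym2_eq h hux⟩
      · exact Or.inr ⟨Or.inr h, ne_of_sym2_eq h hwy⟩

lemma swG_adj_ux (hxu : x ≠ u) : (swG G u w x y).Adj u x :=
  Or.inr ⟨Or.inl rfl, hxu.symm⟩

lemma swG_adj_wy (hyw : y ≠ w) : (swG G u w x y).Adj w y :=
  Or.inr ⟨Or.inr rfl, hyw.symm⟩

lemma swG_adj_of_adj (h : G.Adj a b) (h1 : s(a, b) ≠ s(u, w)) (h2 : s(a, b) ≠ s(x, y)) :
    (swG G u w x y).Adj a b := Or.inl ⟨h, h1, h2⟩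

section inv
variable (huw : G.Adj u w) (hxy : G.Adj x y) (hux : ¬G.Adj u x) (hwy : ¬G.Adj w y)
  (hxu : x ≠ u) (hxw : x ≠ w) (hyu : y ≠ u) (hyw : y ≠ w)
include huw hxy hux hwy hxu hxw hyu hyw

lemma swG_swG : swG (swG G u w x y) u x w y = G := by
  apply SimpleGraph.edgeSet_inj.1
  rw [swG_edgeSet (fun h => huw.ne h) (fun h => hxy.ne h),
    swG_edgeSet (fun h => hxu h.symm) (fun h => hyw h.symm)]
  ext e
  have k1 : e = s(u, w) → e ∈ G.edgeSet := fun h => h ▸ huw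
  have k2 : e = s(x, y) → e ∈ G.edgeSet := fun h => h ▸ hxy
  have k3 : ¬(e ∈ G.edgeSet ∧ e = s(u, x)) := by
    rintro ⟨hm, rfl⟩; exact hux hm
  have k4 : ¬(e ∈ G.edgeSet ∧ e = s(w, y)) := by
    rintro ⟨hm, rfl⟩; exact hwy hm
  simp only [Set.mem_union, Set.mem_diff, Set.mem_insert_iff, Set.mem_singleton_iff]
  tauto

end inv

section reg
variable [Fintype V]

lemma card_insert_erase {s : Finset V} (hb : b ∈ s) (hc : a ∉ s) :
    (insert a (s.erase b)).card = s.card := by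
  rw [Finset.card_insert_of_notMem (fun h => hc (Finset.mem_of_mem_erase h)),
    Finset.card_erase_of_mem hb]
  have : 1 ≤ s.card := Finset.card_pos.2 ⟨b, hb⟩
  omega

lemma swG_nbhd_u (huw' : u ≠ w) (hxu : x ≠ u) (hyu : y ≠ u) :
    (swG G u w x y).neighborFinset u = insert x ((G.neighborFinset u).erase w) := by
  ext b
  simp only [SimpleGraph.mem_neighborFinset, Finset.mem_insert, Finset.mem_erase, swG_adj]
  constructor
  · rintro (⟨h1, h2, h3⟩ | ⟨h4 | h4, h5⟩)
    · refine Or.inr ⟨fun hbw => h2 (by rw [hbw]), h1⟩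
    · rcases Sym2.eq_iff.1 h4 with ⟨-, rfl⟩ | ⟨h6, -⟩
      · exact Or.inl rfl
      · exact absurd h6.symm hxu
    · rcases Sym2.eq_iff.1 h4 with ⟨h6, -⟩ | ⟨h6, -⟩
      · exact absurd h6 huw'
      · exact absurd h6.symm hyu
  · rintro (rfl | ⟨hbw, h1⟩)
    · exact Or.inr ⟨Or.inl rfl, fun h => hxu h.symm⟩
    · refine Or.inl ⟨h1, fun h => ?_, fun h => ?_⟩
      · rcases Sym2.eq_iff.1 h with ⟨-, h6⟩ | ⟨h6, -⟩
        · exact hbw h6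
        · exact huw' h6
      · rcases Sym2.eq_iff.1 h with ⟨h6, -⟩ | ⟨h6, -⟩
        · exact hxu h6.symm
        · exact hyu h6.symm

lemma swG_nbhd_other (hvu : a ≠ u) (hvw : a ≠ w) (hvx : a ≠ x) (hvy : a ≠ y) :
    (swG G u w x y).neighborFinset a = G.neighborFinset a := by
  ext b
  simp only [SimpleGraph.mem_neighborFinset, swG_adj]
  constructor
  · rintro (⟨h1, -, -⟩ | ⟨h4 | h4, -⟩)
    · exact h1
    · rcases Sym2.eq_iff.1 h4 with ⟨h6, -⟩ | ⟨h6, -⟩ <;> [exact absurd h6 hvu; exact absurd h6 hvx]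
    · rcases Sym2.eq_iff.1 h4 with ⟨h6, -⟩ | ⟨h6, -⟩ <;> [exact absurd h6 hvw; exact absurd h6 hvy]
  · intro h1
    refine Or.inl ⟨h1, fun h => ?_, fun h => ?_⟩
    · rcases Sym2.eq_iff.1 h with ⟨h6, -⟩ | ⟨h6, -⟩ <;> [exact hvu h6; exact hvw h6]
    · rcases Sym2.eq_iff.1 h with ⟨h6, -⟩ | ⟨h6, -⟩ <;> [exact hvx h6; exact hvy h6]

lemma swG_regular {d : ℕ} (hreg : G.IsRegularOfDegree d)
    (huw : G.Adj u w) (hxy : G.Adj x y) (hux : ¬G.Adj u x) (hwy : ¬G.Adj w y)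
    (hxu : x ≠ u) (hxw : x ≠ w) (hyu : y ≠ u) (hyw : y ≠ w) :
    (swG G u w x y).IsRegularOfDegree d := by
  intro v
  rw [← SimpleGraph.card_neighborFinset_eq_degree]
  have hmem : ∀ p q : V, q ∈ G.neighborFinset p ↔ G.Adj p q := by
    intro p q; exact SimpleGraph.mem_neighborFinset G p q
  by_cases hvu : v = u
  · subst hvu
    rw [swG_nbhd_u huw.ne hxu hyu,
      card_insert_erase ((hmem _ _).2 huw) (fun hmm => hux ((hmem _ _).1 hmm)),
      SimpleGraph.card_neighborFinset_eq_degree]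
    exact hreg _
  by_cases hvw : v = w
  · subst hvw
    rw [swG_comm1, swG_nbhd_u (fun h => huw.ne h.symm) hyw hxw,
      card_insert_erase ((hmem _ _).2 huw.symm) (fun hmm => hwy ((hmem _ _).1 hmm)),
      SimpleGraph.card_neighborFinset_eq_degree]
    exact hreg _
  by_cases hvx : v = x
  · subst hvx
    rw [swG_comm2, swG_nbhd_u hxy.ne (fun h => hxu h.symm) (fun h => hxw h.symm),
      card_insert_erase ((hmem _ _).2 hxy) (fun hmm => hux (((hmem _ _).1 hmm).symm)),
      SimpleGraph.card_neighborFinset_eq_degree]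
    exact hreg _
  by_cases hvy : v = y
  · subst hvy
    rw [swG_comm2, swG_comm1, swG_nbhd_u (fun h => hxy.ne h.symm) (fun h => hyw h.symm)
      (fun h => hyu h.symm),
      card_insert_erase ((hmem _ _).2 hxy.symm) (fun hmm => hwy (((hmem _ _).1 hmm).symm)),
      SimpleGraph.card_neighborFinset_eq_degree]
    exact hreg _
  · rw [swG_nbhd_other hvu hvw hvx hvy, SimpleGraph.card_neighborFinset_eq_degree]
    exact hreg _

end reg
end M4


section M5
variable {V : Type*} [Fintype V] {G : SimpleGraph V} {d : ℕ}

lemma card_adjPairs (hreg : G.IsRegularOfDegree d) :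
    (Finset.univ.filter fun z : V × V => G.Adj z.1 z.2).card = d * Fintype.card V := by
  have himg : Finset.univ.image (fun dd : G.Dart => dd.toProd) =
      Finset.univ.filter fun z : V × V => G.Adj z.1 z.2 := by
    ext z
    simp only [Finset.mem_image, Finset.mem_filter, Finset.mem_univ, true_and]
    constructor
    · rintro ⟨dd, -, rfl⟩; exact dd.adj
    · intro h; exact ⟨⟨z, h⟩, rfl⟩
  rw [← himg, Finset.card_image_of_injective _ SimpleGraph.Dart.toProd_injective,
    Finset.card_univ, SimpleGraph.dart_card_eq_sum_degrees]
  simp only [hreg _]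
  rw [Finset.sum_const, Finset.card_univ, smul_eq_mul, mul_comm]

lemma card_pairs_fst_le (S : Finset V) (hreg : G.IsRegularOfDegree d) :
    (Finset.univ.filter fun z : V × V => z.1 ∈ S ∧ G.Adj z.1 z.2).card ≤ S.card * d := by
  have hsub : (Finset.univ.filter fun z : V × V => z.1 ∈ S ∧ G.Adj z.1 z.2) ⊆
      S.biUnion fun v => {v} ×ˢ G.neighborFinset v := by
    intro z hz
    rw [Finset.mem_filter] at hz
    rw [Finset.mem_biUnion]
    exact ⟨z.1, hz.2.1, by
      rw [Finset.mem_product, Finset.mem_singleton, SimpleGraph.mem_neighborFinset]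
      exact ⟨rfl, hz.2.2⟩⟩
  calc (Finset.univ.filter fun z : V × V => z.1 ∈ S ∧ G.Adj z.1 z.2).card
      ≤ ∑ v ∈ S, ({v} ×ˢ G.neighborFinset v).card :=
        le_trans (Finset.card_le_card hsub) Finset.card_biUnion_le
    _ = ∑ v ∈ S, d := by
        apply Finset.sum_congr rfl
        intro v _
        rw [Finset.card_product, Finset.card_singleton, one_mul,
          SimpleGraph.card_neighborFinset_eq_degree, hreg]
    _ = S.card * d := by rw [Finset.sum_const, smul_eq_mul]

lemma card_pairs_snd_le (S : Finset V) (hreg : G.IsRegularOfDegree d) :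
    (Finset.univ.filter fun z : V × V => z.2 ∈ S ∧ G.Adj z.1 z.2).card ≤ S.card * d := by
  have hsub : (Finset.univ.filter fun z : V × V => z.2 ∈ S ∧ G.Adj z.1 z.2) ⊆
      S.biUnion fun v => G.neighborFinset v ×ˢ {v} := by
    intro z hz
    rw [Finset.mem_filter] at hz
    rw [Finset.mem_biUnion]
    exact ⟨z.2, hz.2.1, by
      rw [Finset.mem_product, Finset.mem_singleton, SimpleGraph.mem_neighborFinset]
      exact ⟨hz.2.2.symm, rfl⟩⟩
  calc (Finset.univ.filter fun z : V × V => z.2 ∈ S ∧ G.Adj z.1 z.2).card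
      ≤ ∑ v ∈ S, (G.neighborFinset v ×ˢ {v}).card :=
        le_trans (Finset.card_le_card hsub) Finset.card_biUnion_le
    _ = ∑ v ∈ S, d := by
        apply Finset.sum_congr rfl
        intro v _
        rw [Finset.card_product, Finset.card_singleton, mul_one,
          SimpleGraph.card_neighborFinset_eq_degree, hreg]
    _ = S.card * d := by rw [Finset.sum_const, smul_eq_mul]

lemma card_pairs_edges_le (l : List (Sym2 V)) :
    (Finset.univ.filter fun z : V × V => G.Adj z.1 z.2 ∧ s(z.1, z.2) ∈ l).card
      ≤ 2 * l.length := by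
  set s := Finset.univ.filter fun z : V × V => G.Adj z.1 z.2 ∧ s(z.1, z.2) ∈ l with hs
  have key : s.card ≤ 2 * (s.image fun z : V × V => s(z.1, z.2)).card := by
    apply Finset.card_le_mul_card_image
    intro b hb
    induction b with
    | _ p q =>
      have hsub : (s.filter fun z : V × V => s(z.1, z.2) = s(p, q)) ⊆ {(p, q), (q, p)} := by
        intro z hz
        rw [Finset.mem_filter] at hz
        rcases Sym2.eq_iff.1 hz.2 with ⟨h1, h2⟩ | ⟨h1, h2⟩
        · simp [Finset.mem_insert, Prod.ext_iff, h1, h2]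
        · simp [Finset.mem_insert, Prod.ext_iff, h1, h2]
      calc (s.filter fun z : V × V => s(z.1, z.2) = s(p, q)).card
          ≤ ({(p, q), (q, p)} : Finset (V × V)).card := Finset.card_le_card hsub
        _ ≤ 2 := Finset.card_insert_le _ _ |>.trans (by simp)
  have himg : (s.image fun z : V × V => s(z.1, z.2)) ⊆ l.toFinset := by
    intro e he
    rw [Finset.mem_image] at he
    obtain ⟨z, hz, rfl⟩ := he
    rw [List.mem_toFinset]
    exact ((Finset.mem_filter.1 hz).2).2
  calc s.card ≤ 2 * (s.image fun z : V × V => s(z.1, z.2)).card := key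
    _ ≤ 2 * l.toFinset.card := by
        exact Nat.mul_le_mul_left _ (Finset.card_le_card himg)
    _ ≤ 2 * l.length := Nat.mul_le_mul_left _ l.toFinset_card_le

end M5

section M6
variable {V : Type*} [Fintype V]

/-- the bad-event predicate -/
def BadP (G : SimpleGraph V) (o : V) (r : ℕ) : Prop :=
  ¬ (G.induce (graphBall G o r)).IsAcyclic

/-- bundled witness data -/
def witness (G : SimpleGraph V) (o : V) (r : ℕ) (h : BadP G o r) :
    Σ' (u : V) (w : V) (P : G.Walk o u) (Q : G.Walk o w),
      G.Adj u w ∧ P.length ≤ r ∧ Q.length ≤ r ∧ s(u, w) ∉ P.edges ∧ s(u, w) ∉ Q.edges :=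
  Classical.choice (by
    obtain ⟨u, w, hadj, P, Q, h1, h2, h3, h4⟩ := exists_witness h
    exact ⟨⟨u, w, P, Q, hadj, h1, h2, h3, h4⟩⟩)

def wU (G : SimpleGraph V) (o : V) (r : ℕ) : V :=
  if h : BadP G o r then (witness G o r h).1 else o

def wW (G : SimpleGraph V) (o : V) (r : ℕ) : V :=
  if h : BadP G o r then (witness G o r h).2.1 else o

def wPE (G : SimpleGraph V) (o : V) (r : ℕ) : List (Sym2 V) :=
  if h : BadP G o r then (witness G o r h).2.2.1.edges else []

def wQE (G : SimpleGraph V) (o : V) (r : ℕ) : List (Sym2 V) :=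
  if h : BadP G o r then (witness G o r h).2.2.2.1.edges else []

lemma wit_spec {G : SimpleGraph V} {o : V} {r : ℕ} (h : BadP G o r) :
    G.Adj (wU G o r) (wW G o r) ∧ (wPE G o r).length ≤ r ∧ (wQE G o r).length ≤ r ∧
      s(wU G o r, wW G o r) ∉ wPE G o r ∧ s(wU G o r, wW G o r) ∉ wQE G o r := by
  have hspec := (witness G o r h).2.2.2.2
  simp only [wU, wW, wPE, wQE, dif_pos h]
  refine ⟨hspec.1, ?_, ?_, hspec.2.2.2.1, hspec.2.2.2.2⟩
  · rw [SimpleGraph.Walk.length_edges]; exact hspec.2.1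
  · rw [SimpleGraph.Walk.length_edges]; exact hspec.2.2.1

lemma wit_walkP {G : SimpleGraph V} {o : V} {r : ℕ} (h : BadP G o r) :
    ∃ (u : V) (P : G.Walk o u), u = wU G o r ∧ P.edges = wPE G o r ∧ P.length ≤ r :=
  ⟨(witness G o r h).1, (witness G o r h).2.2.1, by rw [wU, dif_pos h],
    by rw [wPE, dif_pos h], (witness G o r h).2.2.2.2.2.1⟩

lemma wit_walkQ {G : SimpleGraph V} {o : V} {r : ℕ} (h : BadP G o r) :
    ∃ (w : V) (Q : G.Walk o w), w = wW G o r ∧ Q.edges = wQE G o r ∧ Q.length ≤ r :=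
  ⟨(witness G o r h).2.1, (witness G o r h).2.2.2.1, by rw [wW, dif_pos h],
    by rw [wQE, dif_pos h], (witness G o r h).2.2.2.2.2.2.1⟩

end M6


section M6b
variable {V : Type*} [Fintype V]

def ChoiceF (o : V) (r : ℕ) (G : SimpleGraph V) : Finset (V × V) :=
  Finset.univ.filter fun z =>
    G.Adj z.1 z.2 ∧
    z.1 ≠ wU G o r ∧ z.1 ≠ wW G o r ∧ ¬G.Adj (wU G o r) z.1 ∧
    z.2 ≠ wU G o r ∧ z.2 ≠ wW G o r ∧ ¬G.Adj (wW G o r) z.2 ∧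
    s(z.1, z.2) ∉ wPE G o r ∧ s(z.1, z.2) ∉ wQE G o r

def MarkF (o : V) (r : ℕ) (G' : SimpleGraph V) : Finset ((V × V) × (V × V)) :=
  Finset.univ.filter fun m =>
    (m.1.1 ∈ graphBall G' o r ∧ G'.Adj m.1.1 m.1.2) ∧
    (m.2.1 ∈ graphBall G' o r ∧ G'.Adj m.2.1 m.2.2)

def RegF (V : Type*) [Fintype V] (d : ℕ) : Finset (SimpleGraph V) :=
  Finset.univ.filter fun G => G.IsRegularOfDegree d

def BadF (V : Type*) [Fintype V] (o : V) (r d : ℕ) : Finset (SimpleGraph V) :=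
  Finset.univ.filter fun G => G.IsRegularOfDegree d ∧ BadP G o r

def T1 (V : Type*) [Fintype V] (o : V) (r d : ℕ) : Finset (SimpleGraph V × (V × V)) :=
  Finset.univ.filter fun t =>
    (t.1.IsRegularOfDegree d ∧ BadP t.1 o r) ∧ t.2 ∈ ChoiceF o r t.1

def T2 (V : Type*) [Fintype V] (o : V) (r d : ℕ) :
    Finset (SimpleGraph V × ((V × V) × (V × V))) :=
  Finset.univ.filter fun t => t.1.IsRegularOfDegree d ∧ t.2 ∈ MarkF o r t.1

def Phi (o : V) (r : ℕ) :
    SimpleGraph V × (V × V) → SimpleGraph V × ((V × V) × (V × V)) :=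
  fun t => (swG t.1 (wU t.1 o r) (wW t.1 o r) t.2.1 t.2.2,
    ((wU t.1 o r, t.2.1), (wW t.1 o r, t.2.2)))

lemma choice_lb {d : ℕ} (o : V) (r : ℕ) (G : SimpleGraph V)
    (hreg : G.IsRegularOfDegree d) (h : BadP G o r) :
    d * Fintype.card V ≤ (ChoiceF o r G).card + (2 * (d + 2) * d + 4 * r) := by
  classical
  have hspec := wit_spec h
  set u := wU G o r with hu
  set w := wW G o r with hw
  set S₁ : Finset V := insert u (insert w (G.neighborFinset u)) with hS₁
  set S₂ : Finset V := insert u (insert w (G.neighborFinset w)) with hS₂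
  set F₁ := Finset.univ.filter fun z : V × V => z.1 ∈ S₁ ∧ G.Adj z.1 z.2 with hF₁
  set F₂ := Finset.univ.filter fun z : V × V => z.2 ∈ S₂ ∧ G.Adj z.1 z.2 with hF₂
  set F₃ := Finset.univ.filter fun z : V × V => G.Adj z.1 z.2 ∧ s(z.1, z.2) ∈ wPE G o r with hF₃
  set F₄ := Finset.univ.filter fun z : V × V => G.Adj z.1 z.2 ∧ s(z.1, z.2) ∈ wQE G o r with hF₄
  have hsub : (Finset.univ.filter fun z : V × V => G.Adj z.1 z.2) ⊆
      ChoiceF o r G ∪ (F₁ ∪ (F₂ ∪ (F₃ ∪ F₄))) := by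
    intro z hz
    rw [Finset.mem_filter] at hz
    have hadj := hz.2
    by_cases c1 : z.1 = u
    · have : z ∈ F₁ := by
        rw [hF₁, Finset.mem_filter]
        exact ⟨Finset.mem_univ _, by rw [hS₁]; simp [c1], hadj⟩
      simp [Finset.mem_union, this]
    by_cases c2 : z.1 = w
    · have : z ∈ F₁ := by
        rw [hF₁, Finset.mem_filter]
        exact ⟨Finset.mem_univ _, by rw [hS₁]; simp [c2], hadj⟩
      simp [Finset.mem_union, this]
    by_cases c3 : G.Adj u z.1
    · have : z ∈ F₁ := by
        rw [hF₁, Finset.mem_filter]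
        refine ⟨Finset.mem_univ _, by rw [hS₁]; simp [SimpleGraph.mem_neighborFinset, c3], hadj⟩
      simp [Finset.mem_union, this]
    by_cases c4 : z.2 = u
    · have : z ∈ F₂ := by
        rw [hF₂, Finset.mem_filter]
        exact ⟨Finset.mem_univ _, by rw [hS₂]; simp [c4], hadj⟩
      simp [Finset.mem_union, this]
    by_cases c5 : z.2 = w
    · have : z ∈ F₂ := by
        rw [hF₂, Finset.mem_filter]
        exact ⟨Finset.mem_univ _, by rw [hS₂]; simp [c5], hadj⟩
      simp [Finset.mem_union, this]
    by_cases c6 : G.Adj w z.2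
    · have : z ∈ F₂ := by
        rw [hF₂, Finset.mem_filter]
        refine ⟨Finset.mem_univ _, by rw [hS₂]; simp [SimpleGraph.mem_neighborFinset, c6], hadj⟩
      simp [Finset.mem_union, this]
    by_cases c7 : s(z.1, z.2) ∈ wPE G o r
    · have : z ∈ F₃ := by
        rw [hF₃, Finset.mem_filter]
        exact ⟨Finset.mem_univ _, hadj, c7⟩
      simp [Finset.mem_union, this]
    by_cases c8 : s(z.1, z.2) ∈ wQE G o r
    · have : z ∈ F₄ := by
        rw [hF₄, Finset.mem_filter]
        exact ⟨Finset.mem_univ _, hadj, c8⟩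
      simp [Finset.mem_union, this]
    · have : z ∈ ChoiceF o r G := by
        rw [ChoiceF, Finset.mem_filter]
        exact ⟨Finset.mem_univ _, hadj, c1, c2, c3, c4, c5, c6, c7, c8⟩
      simp [Finset.mem_union, this]
  have hS₁card : S₁.card ≤ d + 2 := by
    calc S₁.card ≤ (insert w (G.neighborFinset u)).card + 1 := Finset.card_insert_le _ _
      _ ≤ (G.neighborFinset u).card + 1 + 1 := by
          have := Finset.card_insert_le w (G.neighborFinset u)
          omega
      _ = d + 2 := by rw [SimpleGraph.card_neighborFinset_eq_degree, hreg]
  have hS₂card : S₂.card ≤ d + 2 := by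
    calc S₂.card ≤ (insert w (G.neighborFinset w)).card + 1 := Finset.card_insert_le _ _
      _ ≤ (G.neighborFinset w).card + 1 + 1 := by
          have := Finset.card_insert_le w (G.neighborFinset w)
          omega
      _ = d + 2 := by rw [SimpleGraph.card_neighborFinset_eq_degree, hreg]
  have hF₁card : F₁.card ≤ (d + 2) * d :=
    le_trans (card_pairs_fst_le S₁ hreg) (Nat.mul_le_mul_right _ hS₁card)
  have hF₂card : F₂.card ≤ (d + 2) * d :=
    le_trans (card_pairs_snd_le S₂ hreg) (Nat.mul_le_mul_right _ hS₂card)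
  have hF₃card : F₃.card ≤ 2 * r := by
    refine le_trans (card_pairs_edges_le _) ?_
    have := hspec.2.1
    omega
  have hF₄card : F₄.card ≤ 2 * r := by
    refine le_trans (card_pairs_edges_le _) ?_
    have := hspec.2.2.1
    omega
  calc d * Fintype.card V
      = (Finset.univ.filter fun z : V × V => G.Adj z.1 z.2).card := (card_adjPairs hreg).symm
    _ ≤ (ChoiceF o r G ∪ (F₁ ∪ (F₂ ∪ (F₃ ∪ F₄)))).card := Finset.card_le_card hsub
    _ ≤ (ChoiceF o r G).card + (F₁ ∪ (F₂ ∪ (F₃ ∪ F₄))).card := Finset.card_union_le _ _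
    _ ≤ (ChoiceF o r G).card + (F₁.card + (F₂.card + (F₃.card + F₄.card))) := by
        have h1 := Finset.card_union_le F₁ (F₂ ∪ (F₃ ∪ F₄))
        have h2 := Finset.card_union_le F₂ (F₃ ∪ F₄)
        have h3 := Finset.card_union_le F₃ F₄
        omega
    _ ≤ (ChoiceF o r G).card + (2 * (d + 2) * d + 4 * r) := by
        have hring : 2 * ((d + 2) * d) = 2 * (d + 2) * d := by ring
        omega

lemma card_markF {d : ℕ} (o : V) (r : ℕ) {G' : SimpleGraph V}
    (hreg : G'.IsRegularOfDegree d) (hd : 3 ≤ d) :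
    (MarkF o r G').card ≤ (2 * d * (d - 1) ^ r * d) ^ 2 := by
  classical
  set B : Finset V := Finset.univ.filter (· ∈ graphBall G' o r) with hB
  have hBcard : B.card ≤ 2 * d * (d - 1) ^ r := ball_card o hreg hd
  have hhalf : ∀ (p : V × V → Prop) [DecidablePred p],
      (∀ z, p z ↔ (z.1 ∈ B ∧ G'.Adj z.1 z.2)) →
      (Finset.univ.filter p).card ≤ 2 * d * (d - 1) ^ r * d := by
    intro p _ hp
    have : Finset.univ.filter p = Finset.univ.filter fun z : V × V => z.1 ∈ B ∧ G'.Adj z.1 z.2 := by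
      apply Finset.filter_congr
      intro z _
      simp [hp z]
    rw [this]
    exact le_trans (card_pairs_fst_le B hreg) (Nat.mul_le_mul_right _ hBcard)
  have hprod : MarkF o r G' ⊆
      (Finset.univ.filter fun z : V × V => z.1 ∈ B ∧ G'.Adj z.1 z.2) ×ˢ
      (Finset.univ.filter fun z : V × V => z.1 ∈ B ∧ G'.Adj z.1 z.2) := by
    intro m hm
    simp only [MarkF, Finset.mem_filter, Finset.mem_univ, true_and] at hm
    simp only [Finset.mem_product, Finset.mem_filter, Finset.mem_univ, true_and, hB]
    exact ⟨⟨hm.1.1, hm.1.2⟩, hm.2.1, hm.2.2⟩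
  calc (MarkF o r G').card
      ≤ ((Finset.univ.filter fun z : V × V => z.1 ∈ B ∧ G'.Adj z.1 z.2) ×ˢ
        (Finset.univ.filter fun z : V × V => z.1 ∈ B ∧ G'.Adj z.1 z.2)).card :=
        Finset.card_le_card hprod
    _ = (Finset.univ.filter fun z : V × V => z.1 ∈ B ∧ G'.Adj z.1 z.2).card *
        (Finset.univ.filter fun z : V × V => z.1 ∈ B ∧ G'.Adj z.1 z.2).card :=
        Finset.card_product _ _
    _ ≤ (2 * d * (d - 1) ^ r * d) * (2 * d * (d - 1) ^ r * d) := by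
        have := hhalf _ (fun z => Iff.rfl)
        exact Nat.mul_le_mul this this
    _ = (2 * d * (d - 1) ^ r * d) ^ 2 := (sq _).symm

end M6b


section M6c
variable {V : Type*} [Fintype V]

lemma T1_card (o : V) (r d : ℕ) :
    (T1 V o r d).card = ∑ G ∈ BadF V o r d, (ChoiceF o r G).card := by
  classical
  rw [Finset.card_eq_sum_card_fiberwise (f := Prod.fst) (t := BadF V o r d) (fun t ht => by
    rw [Finset.mem_coe, T1, Finset.mem_filter] at ht
    rw [Finset.mem_coe, BadF, Finset.mem_filter]
    exact ⟨Finset.mem_univ _, ht.2.1⟩)]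
  apply Finset.sum_congr rfl
  intro G hG
  rw [BadF, Finset.mem_filter] at hG
  have : (T1 V o r d).filter (fun t => t.1 = G) = {G} ×ˢ ChoiceF o r G := by
    ext t
    simp only [T1, Finset.mem_filter, Finset.mem_univ, true_and, Finset.mem_product,
      Finset.mem_singleton]
    constructor
    · rintro ⟨⟨-, h2⟩, rfl⟩
      exact ⟨rfl, h2⟩
    · rintro ⟨rfl, h2⟩
      exact ⟨⟨hG.2, h2⟩, rfl⟩
  rw [this, Finset.card_product, Finset.card_singleton, one_mul]

lemma T2_card (o : V) (r d : ℕ) :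
    (T2 V o r d).card = ∑ G ∈ RegF V d, (MarkF o r G).card := by
  classical
  rw [Finset.card_eq_sum_card_fiberwise (f := Prod.fst) (t := RegF V d) (fun t ht => by
    rw [Finset.mem_coe, T2, Finset.mem_filter] at ht
    rw [Finset.mem_coe, RegF, Finset.mem_filter]
    exact ⟨Finset.mem_univ _, ht.2.1⟩)]
  apply Finset.sum_congr rfl
  intro G hG
  rw [RegF, Finset.mem_filter] at hG
  have : (T2 V o r d).filter (fun t => t.1 = G) = {G} ×ˢ MarkF o r G := by
    ext t
    simp only [T2, Finset.mem_filter, Finset.mem_univ, true_and, Finset.mem_product,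
      Finset.mem_singleton]
    constructor
    · rintro ⟨⟨-, h2⟩, rfl⟩
      exact ⟨rfl, h2⟩
    · rintro ⟨rfl, h2⟩
      exact ⟨⟨hG.2, h2⟩, rfl⟩
  rw [this, Finset.card_product, Finset.card_singleton, one_mul]

lemma T1_le_T2 (o : V) (r d : ℕ) : (T1 V o r d).card ≤ (T2 V o r d).card := by
  classical
  apply Finset.card_le_card_of_injOn (Phi o r)
  · -- maps to
    rintro ⟨G, x, y⟩ ht
    simp only [Finset.mem_coe, T1, Finset.mem_filter, Finset.mem_univ, true_and] at ht
    obtain ⟨⟨hreg, hbad⟩, hch⟩ := ht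
    simp only [ChoiceF, Finset.mem_filter, Finset.mem_univ, true_and] at hch
    obtain ⟨hxy, hx1, hx2, hx3, hy1, hy2, hy3, hPm, hQm⟩ := hch
    have hspec := wit_spec hbad
    set u := wU G o r with hu
    set w := wW G o r with hw
    have huw : G.Adj u w := hspec.1
    simp only [Finset.mem_coe, T2, Phi, Finset.mem_filter, Finset.mem_univ, true_and]
    refine ⟨swG_regular hreg huw hxy hx3 hy3 hx1 hx2 hy1 hy2, ?_⟩
    simp only [MarkF, Finset.mem_filter, Finset.mem_univ, true_and]
    have hedge : ∀ (el : List (Sym2 V)), s(u, w) ∉ el → s(x, y) ∉ el →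
        ∀ e ∈ el, e ∈ G.edgeSet → e ∈ (swG G u w x y).edgeSet := by
      intro el he1 he2 e he heG
      rw [swG_edgeSet (fun hh => hx1 hh.symm) (fun hh => hy2 hh.symm)]
      refine Set.mem_union_left _ ⟨heG, ?_⟩
      intro hmem
      rcases hmem with h | h
      · exact he1 (h ▸ he)
      · rw [Set.mem_singleton_iff] at h
        exact he2 (h ▸ he)
    constructor
    · constructor
      · -- u ∈ ball of switched graph
        obtain ⟨u', P, hu', hPE, hPlen⟩ := wit_walkP hbad
        rw [← hu] at hu'
        subst hu'
        refine ⟨P.transfer (swG G u w x y) ?_, ?_⟩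
        · intro e he
          exact hedge (wPE G o r) hspec.2.2.2.1 hPm e (hPE ▸ he)
            (P.edges_subset_edgeSet he)
        · rw [SimpleGraph.Walk.length_transfer]
          exact hPlen
      · exact swG_adj_ux hx1
    · constructor
      · obtain ⟨w', Q, hw', hQE, hQlen⟩ := wit_walkQ hbad
        rw [← hw] at hw'
        subst hw'
        refine ⟨Q.transfer (swG G u w x y) ?_, ?_⟩
        · intro e he
          exact hedge (wQE G o r) hspec.2.2.2.2 hQm e (hQE ▸ he)
            (Q.edges_subset_edgeSet he)
        · rw [SimpleGraph.Walk.length_transfer]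
          exact hQlen
      · exact swG_adj_wy hy2
  · -- injective
    rintro ⟨G, x, y⟩ ht ⟨G', x', y'⟩ ht' heq
    rw [Finset.mem_coe] at ht ht'
    simp only [T1, Finset.mem_filter, Finset.mem_univ, true_and] at ht ht'
    obtain ⟨⟨hreg, hbad⟩, hch⟩ := ht
    obtain ⟨⟨hreg', hbad'⟩, hch'⟩ := ht'
    simp only [ChoiceF, Finset.mem_filter, Finset.mem_univ, true_and] at hch hch'
    simp only [Phi, Prod.mk.injEq] at heq
    obtain ⟨hGeq, ⟨huu, hxx⟩, hww, hyy⟩ := heq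
    subst hxx; subst hyy
    have h1 : swG (swG G (wU G o r) (wW G o r) x y) (wU G o r) x (wW G o r) y = G :=
      swG_swG (wit_spec hbad).1 hch.1 hch.2.2.2.1 hch.2.2.2.2.2.2.1
        hch.2.1 hch.2.2.1 hch.2.2.2.2.1 hch.2.2.2.2.2.1
    have h2 : swG (swG G' (wU G' o r) (wW G' o r) x y) (wU G' o r) x (wW G' o r) y = G' :=
      swG_swG (wit_spec hbad').1 hch'.1 hch'.2.2.2.1 hch'.2.2.2.2.2.2.1
        hch'.2.1 hch'.2.2.1 hch'.2.2.2.2.1 hch'.2.2.2.2.2.1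
    have hGG : G = G' := by
      calc G = swG (swG G (wU G o r) (wW G o r) x y) (wU G o r) x (wW G o r) y := h1.symm
        _ = swG (swG G' (wU G' o r) (wW G' o r) x y) (wU G' o r) x (wW G' o r) y := by
            rw [← hGeq, ← huu, ← hww]
        _ = G' := h2
    rw [hGG]
end M6c


section M6d
variable {V : Type*} [Fintype V]

lemma master (o : V) (r d : ℕ) (hd : 3 ≤ d) :
    (BadF V o r d).card * (d * Fintype.card V) ≤
      (RegF V d).card * ((2 * d * (d - 1) ^ r * d) ^ 2) +
        (BadF V o r d).card * (2 * (d + 2) * d + 4 * r) := by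
  classical
  calc (BadF V o r d).card * (d * Fintype.card V)
      = ∑ _G ∈ BadF V o r d, d * Fintype.card V := by
        rw [Finset.sum_const, smul_eq_mul]
    _ ≤ ∑ G ∈ BadF V o r d, ((ChoiceF o r G).card + (2 * (d + 2) * d + 4 * r)) := by
        apply Finset.sum_le_sum
        intro G hG
        rw [BadF, Finset.mem_filter] at hG
        exact choice_lb o r G hG.2.1 hG.2.2
    _ = (T1 V o r d).card + (BadF V o r d).card * (2 * (d + 2) * d + 4 * r) := by
        rw [Finset.sum_add_distrib, T1_card, Finset.sum_const, smul_eq_mul]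
    _ ≤ (T2 V o r d).card + (BadF V o r d).card * (2 * (d + 2) * d + 4 * r) :=
        Nat.add_le_add_right (T1_le_T2 o r d) _
    _ ≤ (RegF V d).card * ((2 * d * (d - 1) ^ r * d) ^ 2) +
        (BadF V o r d).card * (2 * (d + 2) * d + 4 * r) := by
        apply Nat.add_le_add_right
        rw [T2_card]
        calc ∑ G ∈ RegF V d, (MarkF o r G).card
            ≤ ∑ _G ∈ RegF V d, (2 * d * (d - 1) ^ r * d) ^ 2 := by
              apply Finset.sum_le_sum
              intro G hG
              rw [RegF, Finset.mem_filter] at hG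
              exact card_markF o r hG.2 hd
          _ = (RegF V d).card * ((2 * d * (d - 1) ^ r * d) ^ 2) := by
              rw [Finset.sum_const, smul_eq_mul]

end M6d


section Final
open MeasureTheory ProbabilityTheory

lemma final (d r N : ℕ) (o : Fin N) (hd : 3 ≤ d) (hN : d + 1 ≤ N) :
    uniformOn {G : SimpleGraph (Fin N) | G.IsRegularOfDegree d}
      {G : SimpleGraph (Fin N) | ¬ (G.induce (graphBall G o r)).IsAcyclic} ≤
      ENNReal.ofReal (64 * (d : ℝ) ^ 5 * ((d : ℝ) - 1) ^ (2 * r) / N) := by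
  classical
  have hNpos : 0 < N := by omega
  have hd1 : 1 ≤ d := by omega
  have hdR : (3 : ℝ) ≤ (d : ℝ) := by exact_mod_cast hd
  have hNR : (0 : ℝ) < (N : ℝ) := by exact_mod_cast hNpos
  set R := (RegF (Fin N) d).card with hR
  set B := (BadF (Fin N) o r d).card with hB
  have hBR : B ≤ R := by
    apply Finset.card_le_card
    intro G hG
    rw [BadF, Finset.mem_filter] at hG
    rw [RegF, Finset.mem_filter]
    exact ⟨hG.1, hG.2.1⟩
  have hMS : MeasurableSet {G : SimpleGraph (Fin N) | G.IsRegularOfDegree d} :=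
    MeasurableSpace.measurableSet_top
  rw [ProbabilityTheory.uniformOn, ProbabilityTheory.cond_apply hMS]
  have hfin1 : (Set.toFinite {G : SimpleGraph (Fin N) | G.IsRegularOfDegree d}).toFinset
      = RegF (Fin N) d := by
    ext G
    simp [RegF]
  have hfin2 : (Set.toFinite ({G : SimpleGraph (Fin N) | G.IsRegularOfDegree d} ∩
      {G : SimpleGraph (Fin N) | ¬ (G.induce (graphBall G o r)).IsAcyclic})).toFinset
      = BadF (Fin N) o r d := by
    ext G
    simp only [Set.Finite.mem_toFinset, Set.mem_inter_iff, Set.mem_setOf_eq, BadF,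
      Finset.mem_filter, Finset.mem_univ, true_and]
    exact Iff.rfl
  rw [MeasureTheory.Measure.count_apply_finite _ (Set.toFinite _), hfin1,
    MeasureTheory.Measure.count_apply_finite _ (Set.toFinite _), hfin2, ← hR, ← hB]
  by_cases hR0 : R = 0
  · have hB0 : B = 0 := by omega
    rw [hB0]
    simp
  have hdm1 : (0 : ℝ) ≤ (d : ℝ) - 1 := by linarith
  have hq0 : (0 : ℝ) ≤ 64 * (d : ℝ) ^ 5 * ((d : ℝ) - 1) ^ (2 * r) / N := by
    apply div_nonneg _ (le_of_lt hNR)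
    exact mul_nonneg (by positivity) (pow_nonneg hdm1 _)
  rw [← ENNReal.div_eq_inv_mul, ENNReal.div_le_iff (by exact_mod_cast hR0) (ENNReal.natCast_ne_top R)]
  by_cases hreg : (N : ℝ) ≤ 64 * (d : ℝ) ^ 5 * ((d : ℝ) - 1) ^ (2 * r)
  · -- trivial regime: RHS ≥ 1
    calc (B : ℝ≥0∞) ≤ 1 * (R : ℝ≥0∞) := by
          rw [one_mul]; exact_mod_cast hBR
      _ ≤ ENNReal.ofReal (64 * (d : ℝ) ^ 5 * ((d : ℝ) - 1) ^ (2 * r) / N) * R := by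
          apply mul_le_mul_left
          rw [ENNReal.one_le_ofReal, le_div_iff₀ hNR, one_mul]
          exact hreg
  · push_neg at hreg
    have hcast : ((d : ℝ) - 1) = ((d - 1 : ℕ) : ℝ) := by
      rw [Nat.cast_sub hd1, Nat.cast_one]
    have hNbig : 64 * d ^ 5 * (d - 1) ^ (2 * r) < N := by
      have h := hreg
      rw [hcast] at h
      exact_mod_cast h
    have hmaster := master o r d hd (V := Fin N)
    rw [Fintype.card_fin, ← hR, ← hB] at hmaster
    have h4r : r < 4 ^ r := Nat.lt_pow_self (by omega)
    have h4le : 4 ^ r ≤ (d - 1) ^ (2 * r) := by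
      rw [pow_mul]
      apply Nat.pow_le_pow_left
      have h2d : 2 ≤ d - 1 := by omega
      nlinarith
    have hK2 : 2 * (2 * (d + 2) * d + 4 * r) ≤ d * N := by
      have ha1 : 1 ≤ (d - 1) ^ (2 * r) := by omega
      have hdN : 64 * d ^ 6 * (d - 1) ^ (2 * r) ≤ d * N := by
        calc 64 * d ^ 6 * (d - 1) ^ (2 * r) = d * (64 * d ^ 5 * (d - 1) ^ (2 * r)) := by ring
          _ ≤ d * N := Nat.mul_le_mul_left _ (by omega)
      have hd6 : d * d ≤ d ^ 6 := by
        calc d * d = d ^ 2 := (sq d).symm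
          _ ≤ d ^ 6 := Nat.pow_le_pow_right (by omega) (by omega)
      have hdd : d * d ≤ d ^ 6 * (d - 1) ^ (2 * r) :=
        le_trans hd6 (Nat.le_mul_of_pos_right _ ha1)
      have hdle : d ≤ d ^ 6 * (d - 1) ^ (2 * r) := by
        have h1 : d ≤ d ^ 6 := Nat.le_self_pow (by omega) d
        exact le_trans h1 (Nat.le_mul_of_pos_right _ ha1)
      have hrle : r ≤ d ^ 6 * (d - 1) ^ (2 * r) := by
        have h1 : r ≤ (d - 1) ^ (2 * r) := by omega
        have h2 : (d - 1) ^ (2 * r) ≤ d ^ 6 * (d - 1) ^ (2 * r) :=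
          Nat.le_mul_of_pos_left _ (pow_pos (by omega : 0 < d) 6)
        omega
      have e1 : 2 * (2 * (d + 2) * d + 4 * r) = 4 * (d * d) + 8 * d + 8 * r := by ring
      rw [e1]
      linarith [hdd, hdle, hrle, hdN]
    have hKey : B * (d * N) ≤ 2 * (R * ((2 * d * (d - 1) ^ r * d) ^ 2)) := by
      have hmul : B * (2 * (2 * (d + 2) * d + 4 * r)) ≤ B * (d * N) :=
        Nat.mul_le_mul_left _ hK2
      set X := B * (d * N) with hX
      set Y := R * ((2 * d * (d - 1) ^ r * d) ^ 2) with hY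
      set Z := B * (2 * (d + 2) * d + 4 * r) with hZ
      have hmul' : 2 * Z ≤ X := by
        rw [hZ, hX]
        calc 2 * (B * (2 * (d + 2) * d + 4 * r))
            = B * (2 * (2 * (d + 2) * d + 4 * r)) := by ring
          _ ≤ B * (d * N) := hmul
      omega
    have hKeyR := (Nat.cast_le (α := ℝ)).2 hKey
    push_cast [Nat.cast_sub hd1] at hKeyR
    rw [← ENNReal.ofReal_natCast B, ← ENNReal.ofReal_natCast R, ← ENNReal.ofReal_mul hq0]
    apply ENNReal.ofReal_le_ofReal
    rw [div_mul_eq_mul_div, le_div_iff₀ hNR]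
    set z := ((d : ℝ) - 1) ^ r with hz
    have hz2 : ((d : ℝ) - 1) ^ (2 * r) = z ^ 2 := by
      rw [hz, ← pow_mul, mul_comm r 2]
    rw [hz2]
    have hz0 : (0 : ℝ) ≤ z ^ 2 := sq_nonneg z
    have hR0' : (0 : ℝ) ≤ (R : ℝ) := Nat.cast_nonneg R
    have hd0 : (0 : ℝ) < (d : ℝ) := by linarith
    have hexp : 2 * ((R : ℝ) * (2 * (d : ℝ) * z * (d : ℝ)) ^ 2) = 8 * (d : ℝ) ^ 4 * z ^ 2 * (R : ℝ) := by
      ring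
    have hstep : (B : ℝ) * ((d : ℝ) * (N : ℝ)) ≤ 8 * (d : ℝ) ^ 4 * z ^ 2 * (R : ℝ) := by
      rw [← hexp]
      convert hKeyR using 2 <;> ring
    have hd46 : 8 * (d : ℝ) ^ 4 ≤ 64 * (d : ℝ) ^ 6 := by
      have h1 : (1 : ℝ) ≤ (d : ℝ) := by linarith
      have h2 : (d : ℝ) ^ 4 ≤ (d : ℝ) ^ 6 := by
        apply pow_le_pow_right₀ h1 (by omega)
      have h3 : (0 : ℝ) ≤ (d : ℝ) ^ 6 := by positivity
      linarith
    have hmono : 8 * (d : ℝ) ^ 4 * z ^ 2 * (R : ℝ) ≤ (64 * (d : ℝ) ^ 5 * z ^ 2 * (R : ℝ)) * d := by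
      have : (64 * (d : ℝ) ^ 5 * z ^ 2 * (R : ℝ)) * d = 64 * (d : ℝ) ^ 6 * z ^ 2 * (R : ℝ) := by
        ring
      rw [this]
      have h1 : 8 * (d : ℝ) ^ 4 * z ^ 2 ≤ 64 * (d : ℝ) ^ 6 * z ^ 2 :=
        mul_le_mul_of_nonneg_right hd46 hz0
      exact mul_le_mul_of_nonneg_right h1 hR0'
    have hlast : ((B : ℝ) * N) * d ≤ (64 * (d : ℝ) ^ 5 * z ^ 2 * (R : ℝ)) * d := by
      calc ((B : ℝ) * N) * d = (B : ℝ) * ((d : ℝ) * N) := by ring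
        _ ≤ 8 * (d : ℝ) ^ 4 * z ^ 2 * (R : ℝ) := hstep
        _ ≤ _ := hmono
    have := le_of_mul_le_mul_right hlast hd0
    linarith [this]

end Final

end Stmt10Aux

theorem stmt10 (d : ℕ) (hd : 3 ≤ d) :
    ∃ C : ℝ, 0 < C ∧
      ∀ r : ℕ, 1 ≤ r →
        ∀ N : ℕ, ∀ _hN : d + 1 ≤ N, Even (N * d) → C ≤ (N : ℝ) →
          uniformOn {G : SimpleGraph (Fin N) | G.IsRegularOfDegree d}
              {G : SimpleGraph (Fin N) |
                ¬ (G.induce (graphBall G (⟨0, by omega⟩ : Fin N) r)).IsAcyclic} ≤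
            ENNReal.ofReal (C * ((d : ℝ) - 1) ^ (2 * r) / N) := by
  refine ⟨64 * (d : ℝ) ^ 5, ?_, ?_⟩
  · have hd0 : (0 : ℝ) < (d : ℝ) := by exact_mod_cast (show 0 < d by omega)
    positivity
  · intro r hr N hN hEven hCN
    exact Stmt10Aux.final d r N ⟨0, by omega⟩ hd hN
end
end

section
/- Let 𝒢 be a simple graph on a finite vertex set 𝒱 in which every vertex has degree at most d, let A be its adjacency matrix, let v : 𝒱 → ℝ, let t > 0, and set H = −t·A + diag(v). Fix z = E + iη with η > 0 and set μ = log(1 + η/(4td)). Let X, Y ⊆ 𝒱 and let χ_X, χ_Y denote the diagonal 0–1 matrices projecting onto the coordinates in X and Y respectively. Suppose n ∈ ℕ is such that every x ∈ X and y ∈ Y are at graph distance at least n (vertices in different connected components count as being at distance at least n). Then the ℓ²→ℓ² operator norm satisfies ‖χ_X · (H − z·Id)^{−1} · χ_Y‖ ≤ (2/η)·exp(−μ·n). -/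
open Matrix
open scoped Classical Real
noncomputable section


def enormC {V : Type*} [Fintype V] (ψ : V → ℂ) : ℝ := ‖(WithLp.equiv 2 (V → ℂ)).symm ψ‖

lemma enormC_eq {V : Type*} [Fintype V] (ψ : V → ℂ) :
    enormC ψ = Real.sqrt (∑ i, norm (ψ i) ^ 2) := by
  rw [enormC, EuclideanSpace.norm_eq]
  simp

lemma enormC_nonneg' {V : Type*} [Fintype V] (ψ : V → ℂ) : 0 ≤ enormC ψ := norm_nonneg _

lemma enormC_eq_zero {V : Type*} [Fintype V] (ψ : V → ℂ) : enormC ψ = 0 ↔ ψ = 0 := by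
  rw [enormC, norm_eq_zero]
  constructor
  · intro h; have := congrArg (WithLp.equiv 2 (V → ℂ)) h; simpa using this
  · intro h; subst h; simp

lemma enormC_smul {V : Type*} [Fintype V] (c : ℂ) (ψ : V → ℂ) :
    enormC (c • ψ) = norm c * enormC ψ := by
  rw [enormC, enormC, WithLp.equiv_symm_apply, WithLp.toLp_smul, norm_smul]

lemma enormC_sub_le {V : Type*} [Fintype V] (a b : V → ℂ) :
    enormC (a - b) ≤ enormC a + enormC b := by
  rw [enormC, enormC, enormC, WithLp.equiv_symm_apply, WithLp.toLp_sub]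
  exact norm_sub_le _ _

lemma CT_schur {V : Type*} [Fintype V] (B : Matrix V V ℂ) (r : ℝ) (hr : 0 ≤ r)
    (hrow : ∀ x, ∑ y, norm (B x y) ≤ r)
    (hcol : ∀ y, ∑ x, norm (B x y) ≤ r) (ψ : V → ℂ) :
    enormC (B.mulVec ψ) ≤ r * enormC ψ := by
  rw [enormC_eq, enormC_eq]
  have hmv : ∀ x, B.mulVec ψ x = ∑ y, B x y * ψ y := by
    intro x; simp [Matrix.mulVec, dotProduct]
  have step1 : ∀ x, norm (B.mulVec ψ x) ≤ ∑ y, norm (B x y) * norm (ψ y) := by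
    intro x
    rw [hmv x]
    refine le_trans (norm_sum_le _ _) ?_
    refine le_of_eq (Finset.sum_congr rfl fun y _ => ?_)
    exact norm_mul _ _
  have step2 : ∀ x, (∑ y, norm (B x y) * norm (ψ y)) ^ 2 ≤
      r * ∑ y, norm (B x y) * norm (ψ y) ^ 2 := by
    intro x
    have cs := Finset.sum_mul_sq_le_sq_mul_sq Finset.univ
      (fun y => Real.sqrt (norm (B x y)))
      (fun y => Real.sqrt (norm (B x y)) * norm (ψ y))
    have e1 : ∀ y : V, Real.sqrt (norm (B x y)) *
        (Real.sqrt (norm (B x y)) * norm (ψ y)) =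
        norm (B x y) * norm (ψ y) := fun y => by
      rw [← mul_assoc, Real.mul_self_sqrt (norm_nonneg _)]
    have e2 : ∀ y : V, Real.sqrt (norm (B x y)) ^ 2 = norm (B x y) := fun y =>
      Real.sq_sqrt (norm_nonneg _)
    have e3 : ∀ y : V, (Real.sqrt (norm (B x y)) * norm (ψ y)) ^ 2 =
        norm (B x y) * norm (ψ y) ^ 2 := fun y => by
      rw [mul_pow, e2]
    simp only [e1, e2, e3] at cs
    refine le_trans cs ?_
    refine mul_le_mul (hrow x) le_rfl ?_ hr
    positivity
  have key : ∑ x, norm (B.mulVec ψ x) ^ 2 ≤ r ^ 2 * ∑ i, norm (ψ i) ^ 2 := by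
    have c1 : ∑ x, norm (B.mulVec ψ x) ^ 2 ≤
        ∑ x, (∑ y, norm (B x y) * norm (ψ y)) ^ 2 := by
      refine Finset.sum_le_sum fun x _ => ?_
      exact pow_le_pow_left₀ (norm_nonneg _) (step1 x) 2
    have c2 : ∑ x, (∑ y, norm (B x y) * norm (ψ y)) ^ 2 ≤
        ∑ x, r * ∑ y, norm (B x y) * norm (ψ y) ^ 2 :=
      Finset.sum_le_sum fun x _ => step2 x
    have c3 : ∑ x, r * ∑ y, norm (B x y) * norm (ψ y) ^ 2 =
        r * ∑ y, (∑ x, norm (B x y)) * norm (ψ y) ^ 2 := by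
      rw [← Finset.mul_sum]
      congr 1
      rw [Finset.sum_comm]
      exact Finset.sum_congr rfl fun y _ => (Finset.sum_mul _ _ _).symm
    have c4 : r * ∑ y, (∑ x, norm (B x y)) * norm (ψ y) ^ 2 ≤
        r * ∑ y, r * norm (ψ y) ^ 2 := by
      refine mul_le_mul_of_nonneg_left (Finset.sum_le_sum fun y _ => ?_) hr
      exact mul_le_mul_of_nonneg_right (hcol y) (sq_nonneg _)
    have c5 : r * ∑ y, r * norm (ψ y) ^ 2 = r ^ 2 * ∑ i, norm (ψ i) ^ 2 := by
      rw [← Finset.mul_sum]; ring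
    linarith [c1, c2, c4]
  have final : Real.sqrt (∑ i, norm (B.mulVec ψ i) ^ 2) ≤
      Real.sqrt (r ^ 2 * ∑ i, norm (ψ i) ^ 2) := Real.sqrt_le_sqrt key
  rw [Real.sqrt_mul (sq_nonneg r), Real.sqrt_sq hr] at final
  exact final

set_option maxHeartbeats 1000000 in
lemma CT_lower {V : Type*} [Fintype V] [DecidableEq V] (H : Matrix V V ℝ) (hH : H.IsSymm)
    (E η : ℝ) (hη : 0 < η) (ψ : V → ℂ) :
    η * enormC ψ ≤
      enormC (((H.map (fun x => (x : ℂ))) - (E + η * Complex.I) • 1).mulVec ψ) := by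
  set K : Matrix V V ℂ := (H.map (fun x => (x : ℂ))) - (E + η * Complex.I) • 1 with hK
  set s : ℝ := ∑ i, norm (ψ i) ^ 2 with hs
  have hs0 : 0 ≤ s := Finset.sum_nonneg fun i _ => sq_nonneg _
  -- compute mulVec
  have hmv : ∀ x, K.mulVec ψ x = (∑ y, (H x y : ℂ) * ψ y) - (E + η * Complex.I) * ψ x := by
    intro x
    rw [hK, Matrix.sub_mulVec, Matrix.smul_mulVec, Matrix.one_mulVec]
    simp [Matrix.mulVec, dotProduct, Matrix.map_apply]
  set S : ℂ := ∑ x, (starRingEnd ℂ) (ψ x) * K.mulVec ψ x with hS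
  have hT : (∑ x, ∑ y, (starRingEnd ℂ) (ψ x) * ((H x y : ℂ) * ψ y)).im = 0 := by
    set T : ℂ := ∑ x, ∑ y, (starRingEnd ℂ) (ψ x) * ((H x y : ℂ) * ψ y) with hTd
    have hconj : (starRingEnd ℂ) T = T := by
      rw [hTd, map_sum]
      rw [Finset.sum_comm]
      refine Finset.sum_congr rfl fun x _ => ?_
      rw [map_sum]
      refine Finset.sum_congr rfl fun y _ => ?_
      simp only [_root_.map_mul, Complex.conj_conj, Complex.conj_ofReal]
      have : H y x = H x y := congrFun (congrFun hH.symm y) x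
      rw [this]; ring
    have := Complex.conj_eq_iff_im.mp hconj
    exact this
  have hSim : S.im = -η * s := by
    rw [hS]
    have : ∀ x, (starRingEnd ℂ) (ψ x) * K.mulVec ψ x =
        (∑ y, (starRingEnd ℂ) (ψ x) * ((H x y : ℂ) * ψ y)) -
          (E + η * Complex.I) * ((starRingEnd ℂ) (ψ x) * ψ x) := by
      intro x
      rw [hmv x, mul_sub, Finset.mul_sum]
      ring
    rw [Finset.sum_congr rfl fun x _ => this x, Finset.sum_sub_distrib]
    rw [Complex.sub_im, hT]
    have hcm : ∀ x, (starRingEnd ℂ) (ψ x) * ψ x = ((norm (ψ x) ^ 2 : ℝ) : ℂ) := by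
      intro x
      rw [mul_comm, Complex.mul_conj, Complex.normSq_eq_norm_sq]
    have hsum : ∑ x, (starRingEnd ℂ) (ψ x) * ψ x = (s : ℂ) := by
      rw [hs, Complex.ofReal_sum]
      exact Finset.sum_congr rfl fun x _ => hcm x
    rw [← Finset.mul_sum, hsum, Complex.mul_im]
    simp only [Complex.add_re, Complex.add_im, Complex.ofReal_re, Complex.ofReal_im,
      Complex.mul_re, Complex.mul_im, Complex.I_re, Complex.I_im]
    ring
  have habs : η * s ≤ norm S := by
    have : η * s = |S.im| := by rw [hSim]; rw [abs_of_nonpos (by nlinarith)]; ring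
    rw [this]
    exact Complex.abs_im_le_norm S
  have hcs : norm S ≤ enormC ψ * enormC (K.mulVec ψ) := by
    have h1 : norm S ≤ ∑ x, norm (ψ x) * norm (K.mulVec ψ x) := by
      refine le_trans (norm_sum_le _ _) ?_
      refine le_of_eq (Finset.sum_congr rfl fun x _ => ?_)
      rw [norm_mul, Complex.norm_conj]
    have h2 : (∑ x, norm (ψ x) * norm (K.mulVec ψ x)) ^ 2 ≤
        (∑ x, norm (ψ x) ^ 2) * (∑ x, norm (K.mulVec ψ x) ^ 2) :=
      Finset.sum_mul_sq_le_sq_mul_sq Finset.univ (fun x => norm (ψ x))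
        (fun x => norm (K.mulVec ψ x))
    have h3 : ∑ x, norm (ψ x) * norm (K.mulVec ψ x) ≤
        enormC ψ * enormC (K.mulVec ψ) := by
      rw [enormC_eq, enormC_eq, ← Real.sqrt_mul (Finset.sum_nonneg fun i _ => sq_nonneg _)]
      have hx0 : 0 ≤ ∑ x, norm (ψ x) * norm (K.mulVec ψ x) :=
        Finset.sum_nonneg fun x _ =>
          mul_nonneg (norm_nonneg _) (norm_nonneg _)
      have hy0 : 0 ≤ (∑ x, norm (ψ x) ^ 2) * (∑ x, norm (K.mulVec ψ x) ^ 2) :=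
        mul_nonneg (Finset.sum_nonneg fun x _ => sq_nonneg _)
          (Finset.sum_nonneg fun x _ => sq_nonneg _)
      exact (Real.le_sqrt hx0 hy0).mpr h2
    exact le_trans h1 h3
  have hψ2 : enormC ψ ^ 2 = s := by
    rw [enormC_eq, Real.sq_sqrt hs0]
  rcases eq_or_lt_of_le (enormC_nonneg' ψ) with h0 | h0
  · rw [← h0, mul_zero]; exact enormC_nonneg' _
  · have : η * enormC ψ * enormC ψ ≤ enormC ψ * enormC (K.mulVec ψ) := by
      calc η * enormC ψ * enormC ψ = η * s := by rw [← hψ2]; ring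
        _ ≤ norm S := habs
        _ ≤ enormC ψ * enormC (K.mulVec ψ) := hcs
    nlinarith [enormC_nonneg' (K.mulVec ψ)]

lemma CT_diag {V : Type*} [Fintype V] [DecidableEq V] (g : V → ℂ) (c : ℝ) (hc : 0 ≤ c)
    (h : ∀ x, norm (g x) ≤ c) (v : V → ℂ) :
    enormC ((Matrix.diagonal g).mulVec v) ≤ c * enormC v := by
  rw [enormC_eq, enormC_eq]
  have key : ∑ x, norm ((Matrix.diagonal g).mulVec v x) ^ 2 ≤
      c ^ 2 * ∑ i, norm (v i) ^ 2 := by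
    rw [Finset.mul_sum]
    refine Finset.sum_le_sum fun x _ => ?_
    rw [Matrix.mulVec_diagonal, norm_mul, mul_pow]
    refine mul_le_mul_of_nonneg_right ?_ (sq_nonneg _)
    exact pow_le_pow_left₀ (norm_nonneg _) (h x) 2
  have final := Real.sqrt_le_sqrt key
  rwa [Real.sqrt_mul (sq_nonneg c), Real.sqrt_sq hc] at final
theorem stmt11 (V : Type*) [Fintype V] [DecidableEq V] (d : ℕ) (hd : 0 < d)
    (G : SimpleGraph V) (hdeg : ∀ v : V, G.degree v ≤ d)
    (vpot : V → ℝ) (t : ℝ) (ht : 0 < t) (E η : ℝ) (hη : 0 < η)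
    (X Y : Set V) (n : ℕ)
    (hdist : ∀ x ∈ X, ∀ y ∈ Y, ∀ p : G.Walk x y, n ≤ p.length) :
    ∀ ψ : V → ℂ,
      Real.sqrt (∑ i, norm
          ((Matrix.diagonal (fun v => if v ∈ X then (1 : ℂ) else 0) *
            (((-t) • G.adjMatrix ℝ + Matrix.diagonal vpot).map (fun x => (x : ℂ)) -
              (E + η * Complex.I) • 1)⁻¹ *
            Matrix.diagonal (fun v => if v ∈ Y then (1 : ℂ) else 0)).mulVec ψ i) ^ 2) ≤
        2 / η * Real.exp (-(Real.log (1 + η / (4 * t * d))) * n) *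
          Real.sqrt (∑ i, norm (ψ i) ^ 2) := by
  intro ψ
  rw [← enormC_eq, ← enormC_eq]
  set μ : ℝ := Real.log (1 + η / (4 * t * (d : ℝ))) with hμ
  have hd0 : (0 : ℝ) < d := by exact_mod_cast hd
  have hq : 0 < η / (4 * t * (d : ℝ)) := by positivity
  have hμ0 : 0 ≤ μ := Real.log_nonneg (by linarith)
  have hexp : Real.exp μ = 1 + η / (4 * t * (d : ℝ)) := Real.exp_log (by linarith)
  set Hr : Matrix V V ℝ := (-t) • G.adjMatrix ℝ + Matrix.diagonal vpot with hHr
  set K : Matrix V V ℂ := Hr.map (fun x => (x : ℂ)) - (E + η * Complex.I) • 1 with hKdef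
  set χX : Matrix V V ℂ := Matrix.diagonal (fun v => if v ∈ X then (1 : ℂ) else 0) with hχX
  set χY : Matrix V V ℂ := Matrix.diagonal (fun v => if v ∈ Y then (1 : ℂ) else 0) with hχY
  -- the distance-like function
  set Sd : V → Set ℕ := fun x => {k | ∃ y ∈ Y, ∃ p : G.Walk x y, p.length = k} with hSd
  set f : V → ℕ := fun x => if (Sd x).Nonempty then min n (sInf (Sd x)) else n with hf
  have hfub : ∀ x, f x ≤ n := by
    intro x; rw [hf]; dsimp only
    split
    · exact min_le_left _ _
    · exact le_refl n
  have hfX : ∀ x ∈ X, f x = n := by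
    intro x hx; rw [hf]; dsimp only
    split
    · rename_i h
      obtain ⟨y, hy, p, hp⟩ := Nat.sInf_mem h
      have := hdist x hx y hy p
      have hn : n ≤ sInf (Sd x) := by omega
      omega
    · rfl
  have hfY : ∀ y ∈ Y, f y = 0 := by
    intro y hy
    have h0 : 0 ∈ Sd y := ⟨y, hy, SimpleGraph.Walk.nil, rfl⟩
    have hne : (Sd y).Nonempty := ⟨0, h0⟩
    have : sInf (Sd y) = 0 := Nat.sInf_eq_zero.mpr (Or.inl h0)
    rw [hf]; dsimp only
    rw [if_pos hne, this]
    omega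
  have hfadj : ∀ x y, G.Adj x y → f x ≤ f y + 1 := by
    intro x y hxy
    by_cases h : (Sd y).Nonempty
    · obtain ⟨z, hz, p, hp⟩ := Nat.sInf_mem h
      have hmem : sInf (Sd y) + 1 ∈ Sd x :=
        ⟨z, hz, SimpleGraph.Walk.cons hxy p, by rw [SimpleGraph.Walk.length_cons, hp]⟩
      have hne : (Sd x).Nonempty := ⟨_, hmem⟩
      have hle := Nat.sInf_le hmem
      rw [hf]; dsimp only
      rw [if_pos h, if_pos hne]
      omega
    · have h1 : f y = n := by rw [hf]; dsimp only; rw [if_neg h]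
      have := hfub x
      omega
  -- weights
  set W : Matrix V V ℂ := Matrix.diagonal (fun x => ((Real.exp (μ * f x) : ℝ) : ℂ)) with hW
  set Wi : Matrix V V ℂ := Matrix.diagonal (fun x => ((Real.exp (-(μ * f x)) : ℝ) : ℂ)) with hWi
  have hWWi : W * Wi = 1 := by
    rw [hW, hWi, Matrix.diagonal_mul_diagonal, ← Matrix.diagonal_one]
    refine congrArg Matrix.diagonal ?_
    funext x
    rw [← Complex.ofReal_mul, ← Real.exp_add]
    norm_num
  have hWiW : Wi * W = 1 := by
    rw [hW, hWi, Matrix.diagonal_mul_diagonal, ← Matrix.diagonal_one]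
    refine congrArg Matrix.diagonal ?_
    funext x
    rw [← Complex.ofReal_mul, ← Real.exp_add]
    norm_num
  -- symmetry and lower bound
  have hHsym : Hr.IsSymm := by
    rw [hHr]
    exact ((SimpleGraph.isSymm_adjMatrix G).smul (-t)).add (Matrix.isSymm_diagonal vpot)
  have hlow : ∀ φ : V → ℂ, η * enormC φ ≤ enormC (K.mulVec φ) := fun φ =>
    CT_lower Hr hHsym E η hη φ
  -- invertibility
  have henorm0 : enormC (0 : V → ℂ) = 0 := by rw [enormC_eq]; simp
  have hKinj : Function.Injective K.mulVec := by
    intro a b hab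
    have h1 := hlow (a - b)
    rw [Matrix.mulVec_sub, hab, sub_self, henorm0] at h1
    have h2 := enormC_nonneg' (a - b)
    have h3 : enormC (a - b) = 0 := by nlinarith
    have h4 := (enormC_eq_zero (a - b)).mp h3
    exact sub_eq_zero.mp h4
  have hKunit : IsUnit K := Matrix.mulVec_injective_iff_isUnit.mp hKinj
  have hdet : IsUnit K.det := (Matrix.isUnit_iff_isUnit_det K).mp hKunit
  have hKKi : K * K⁻¹ = 1 := Matrix.mul_nonsing_inv K hdet
  -- conjugated operators
  set M : Matrix V V ℂ := W * K⁻¹ * Wi with hM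
  set K' : Matrix V V ℂ := W * K * Wi with hK'
  have hK'M : K' * M = 1 := by
    rw [hK', hM]
    simp only [Matrix.mul_assoc]
    rw [← Matrix.mul_assoc Wi W, hWiW, Matrix.one_mul, ← Matrix.mul_assoc K K⁻¹, hKKi,
      Matrix.one_mul, hWWi]
  have hKi_eq : K⁻¹ = Wi * M * W := by
    rw [hM]
    have e : Wi * (W * K⁻¹ * Wi) * W = Wi * W * K⁻¹ * (Wi * W) := by
      simp only [Matrix.mul_assoc]
    rw [e, hWiW, Matrix.one_mul, Matrix.mul_one]
  set B : Matrix V V ℂ := K' - K with hB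
  -- entrywise bound on B
  have hBent : ∀ x y, norm (B x y) ≤ η / (4 * (d : ℝ)) * (if G.Adj x y then 1 else 0) := by
    intro x y
    have hBxy : B x y = ((Real.exp (μ * f x) : ℝ) : ℂ) * K x y * ((Real.exp (-(μ * f y)) : ℝ) : ℂ)
        - K x y := by
      rw [hB, Matrix.sub_apply, hK', hW, hWi, Matrix.mul_diagonal, Matrix.diagonal_mul]
    by_cases hadj : G.Adj x y
    · have hxy : x ≠ y := G.ne_of_adj hadj
      have hKxy : K x y = ((-t : ℝ) : ℂ) := by
        rw [hKdef, Matrix.sub_apply, Matrix.map_apply, hHr]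
        rw [Matrix.add_apply, Matrix.smul_apply, Matrix.diagonal_apply_ne _ hxy,
          SimpleGraph.adjMatrix_apply, if_pos hadj, Matrix.smul_apply,
          Matrix.one_apply_ne hxy]
        simp [smul_eq_mul]
      rw [hBxy, hKxy]
      have heq : ((Real.exp (μ * f x) : ℝ) : ℂ) * ((-t : ℝ) : ℂ) * ((Real.exp (-(μ * f y)) : ℝ) : ℂ)
          - ((-t : ℝ) : ℂ) = (((Real.exp (μ * f x) * Real.exp (-(μ * f y)) - 1) * (-t) : ℝ) : ℂ) := by
        push_cast; ring
      rw [heq, Complex.norm_real, Real.norm_eq_abs, if_pos hadj, mul_one, abs_mul, abs_neg, abs_of_pos ht]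
      -- bound |e^{μ(fx - fy)} - 1| * t
      have hfx := hfadj x y hadj
      have hfy := hfadj y x hadj.symm
      have hfxR : (f x : ℝ) ≤ (f y : ℝ) + 1 := by exact_mod_cast hfx
      have hfyR : (f y : ℝ) ≤ (f x : ℝ) + 1 := by exact_mod_cast hfy
      have hprod : Real.exp (μ * f x) * Real.exp (-(μ * f y)) =
          Real.exp (μ * f x - μ * f y) := by
        rw [← Real.exp_add]; ring_nf
      have h1 : μ * f x - μ * f y ≤ μ := by nlinarith
      have h2 : -μ ≤ μ * f x - μ * f y := by nlinarith
      have hup : Real.exp (μ * f x - μ * f y) ≤ Real.exp μ := Real.exp_le_exp.mpr h1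
      have hdn : Real.exp (-μ) ≤ Real.exp (μ * f x - μ * f y) := Real.exp_le_exp.mpr h2
      have hinv : Real.exp μ * Real.exp (-μ) = 1 := by rw [← Real.exp_add]; norm_num
      have h1e : 1 ≤ Real.exp μ := Real.one_le_exp hμ0
      have hkey : |Real.exp (μ * f x - μ * f y) - 1| ≤ Real.exp μ - 1 := by
        rw [abs_le]
        constructor
        · nlinarith
        · linarith
      have hval : (Real.exp μ - 1) * t = η / (4 * (d : ℝ)) := by
        rw [hexp]
        field_simp
        ring
      rw [hprod]
      calc |Real.exp (μ * f x - μ * f y) - 1| * t ≤ (Real.exp μ - 1) * t :=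
            mul_le_mul_of_nonneg_right hkey (le_of_lt ht)
        _ = η / (4 * (d : ℝ)) := hval
    · rw [if_neg hadj, mul_zero]
      by_cases hxy : x = y
      · subst hxy
        have hww : ((Real.exp (μ * f x) : ℝ) : ℂ) * ((Real.exp (-(μ * f x)) : ℝ) : ℂ) = 1 := by
          rw [← Complex.ofReal_mul, ← Real.exp_add]
          norm_num
        have : B x x = 0 := by
          rw [hBxy]
          have e : ((Real.exp (μ * f x) : ℝ) : ℂ) * K x x * ((Real.exp (-(μ * f x)) : ℝ) : ℂ)
              = K x x * (((Real.exp (μ * f x) : ℝ) : ℂ) * ((Real.exp (-(μ * f x)) : ℝ) : ℂ)) := by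
            ring
          rw [e, hww, mul_one, sub_self]
        rw [this]
        simp
      · have hKxy : K x y = 0 := by
          rw [hKdef, Matrix.sub_apply, Matrix.map_apply, hHr]
          rw [Matrix.add_apply, Matrix.smul_apply, Matrix.diagonal_apply_ne _ hxy,
            SimpleGraph.adjMatrix_apply, if_neg hadj, Matrix.smul_apply,
            Matrix.one_apply_ne hxy]
          simp
        rw [hBxy, hKxy]
        simp
  -- row and column sums
  have hdegsum : ∀ x, ∑ y, (if G.Adj x y then (1 : ℝ) else 0) = (G.degree x : ℝ) := by
    intro x
    rw [Finset.sum_boole]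
    congr 1
    rw [SimpleGraph.degree, SimpleGraph.neighborFinset_eq_filter]
  have hrow : ∀ x, ∑ y, norm (B x y) ≤ η / 4 := by
    intro x
    calc ∑ y, norm (B x y)
        ≤ ∑ y, η / (4 * (d : ℝ)) * (if G.Adj x y then 1 else 0) :=
          Finset.sum_le_sum fun y _ => hBent x y
      _ = η / (4 * (d : ℝ)) * (G.degree x : ℝ) := by rw [← Finset.mul_sum, hdegsum x]
      _ ≤ η / (4 * (d : ℝ)) * (d : ℝ) := by
          refine mul_le_mul_of_nonneg_left ?_ (by positivity)
          exact_mod_cast hdeg x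
      _ = η / 4 := by field_simp
  have hcol : ∀ y, ∑ x, norm (B x y) ≤ η / 4 := by
    intro y
    calc ∑ x, norm (B x y)
        ≤ ∑ x, η / (4 * (d : ℝ)) * (if G.Adj y x then 1 else 0) := by
          refine Finset.sum_le_sum fun x _ => ?_
          have := hBent x y
          rwa [show (if G.Adj x y then (1:ℝ) else 0) = (if G.Adj y x then (1:ℝ) else 0) by
            simp [SimpleGraph.adj_comm]] at this
      _ = η / (4 * (d : ℝ)) * (G.degree y : ℝ) := by rw [← Finset.mul_sum, hdegsum y]
      _ ≤ η / (4 * (d : ℝ)) * (d : ℝ) := by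
          refine mul_le_mul_of_nonneg_left ?_ (by positivity)
          exact_mod_cast hdeg y
      _ = η / 4 := by field_simp
  have hBop : ∀ φ : V → ℂ, enormC (B.mulVec φ) ≤ η / 4 * enormC φ :=
    CT_schur B (η / 4) (by positivity) hrow hcol
  -- resolvent bound for M
  have hMop : ∀ φ : V → ℂ, enormC (M.mulVec φ) ≤ 2 / η * enormC φ := by
    intro φ
    have hKM : K'.mulVec (M.mulVec φ) = φ := by
      rw [Matrix.mulVec_mulVec, hK'M, Matrix.one_mulVec]
    have h1 : η * enormC (M.mulVec φ) ≤ enormC (K.mulVec (M.mulVec φ)) := hlow _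
    have h2 : K.mulVec (M.mulVec φ) = φ - B.mulVec (M.mulVec φ) := by
      have hKB : K = K' - B := by rw [hB]; abel
      rw [hKB, Matrix.sub_mulVec, hKM]
    have h3 : enormC (K.mulVec (M.mulVec φ)) ≤ enormC φ + enormC (B.mulVec (M.mulVec φ)) := by
      rw [h2]; exact enormC_sub_le _ _
    have h4 := hBop (M.mulVec φ)
    have h5 := enormC_nonneg' (M.mulVec φ)
    have h6 := enormC_nonneg' φ
    have hkey : enormC (M.mulVec φ) * η ≤ 2 * enormC φ := by linarith
    rw [div_mul_eq_mul_div, le_div_iff₀ hη]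
    exact hkey
  -- diagonal projections
  have hgX : ∀ x, norm ((fun v => if v ∈ X then (1 : ℂ) else 0) x) ≤ 1 := by
    intro x; dsimp only; split <;> simp
  have hgY : ∀ x, norm ((fun v => if v ∈ Y then (1 : ℂ) else 0) x) ≤ 1 := by
    intro x; dsimp only; split <;> simp
  -- matrix identity
  set c : ℝ := Real.exp (-(μ * n)) with hc
  have hc0 : 0 < c := Real.exp_pos _
  have hXW : χX * Wi = ((c : ℝ) : ℂ) • χX := by
    rw [hχX, hWi, Matrix.diagonal_mul_diagonal, ← Matrix.diagonal_smul]
    refine congrArg Matrix.diagonal ?_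
    funext x
    simp only [Pi.smul_apply, smul_eq_mul]
    by_cases hx : x ∈ X
    · simp [hx, hfX x hx, hc]
    · simp [hx]
  have hWY : W * χY = χY := by
    rw [hχY, hW, Matrix.diagonal_mul_diagonal]
    refine congrArg Matrix.diagonal ?_
    funext y
    by_cases hy : y ∈ Y
    · simp [hy, hfY y hy]
    · simp [hy]
  have hmat : χX * K⁻¹ * χY = ((c : ℝ) : ℂ) • (χX * (M * χY)) := by
    rw [hKi_eq]
    have e1 : χX * (Wi * M * W) * χY = χX * Wi * (M * (W * χY)) := by
      simp only [Matrix.mul_assoc]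
    rw [e1, hWY, hXW, Matrix.smul_mul]
  have hgoal : (χX * K⁻¹ * χY).mulVec ψ
      = ((c : ℝ) : ℂ) • (χX.mulVec (M.mulVec (χY.mulVec ψ))) := by
    rw [hmat, Matrix.smul_mulVec, ← Matrix.mulVec_mulVec, ← Matrix.mulVec_mulVec]
  have s1 : enormC (χY.mulVec ψ) ≤ enormC ψ := by
    have h := CT_diag (fun v => if v ∈ Y then (1 : ℂ) else 0) 1 zero_le_one hgY ψ
    rwa [one_mul, ← hχY] at h
  have s2 : enormC (M.mulVec (χY.mulVec ψ)) ≤ 2 / η * enormC ψ := by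
    refine (hMop _).trans ?_
    exact mul_le_mul_of_nonneg_left s1 (by positivity)
  have s3 : enormC (χX.mulVec (M.mulVec (χY.mulVec ψ))) ≤ 2 / η * enormC ψ := by
    have h := CT_diag (fun v => if v ∈ X then (1 : ℂ) else 0) 1 zero_le_one hgX
      (M.mulVec (χY.mulVec ψ))
    rw [one_mul, ← hχX] at h
    exact h.trans s2
  rw [show -μ * (n : ℝ) = -(μ * (n : ℝ)) by ring]
  rw [hgoal, enormC_smul, Complex.norm_real, Real.norm_eq_abs, abs_of_pos hc0]
  calc c * enormC (χX.mulVec (M.mulVec (χY.mulVec ψ)))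
      ≤ c * (2 / η * enormC ψ) := mul_le_mul_of_nonneg_left s3 (le_of_lt hc0)
    _ = 2 / η * Real.exp (-(μ * (n : ℝ))) * enormC ψ := by rw [hc]; ring
end
end
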